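/- arXiv:math/0305399 — 4 statements merged into one kernel-verified Lean document; each statement's English description precedes it below -/
import Mathlib

section
/- Let E be a subset of the real line of Lebesgue measure zero, let s ∈ [0,1] and let K > 0. Suppose that for every open interval (a,b), the s-dimensional Hausdorff measure satisfies H^s(E ∩ (a,b)) ≤ K·(b−a)·H^s(E). Then H^s(E) is either 0 or ∞. -/
open MeasureTheory
open scoped ENNReal NNReal

private lemma aux_bddAbove {C : Set ℝ} (hC : C.OrdConnected) (hv : volume C ≠ ⊤) :
    BddAbove C := by
  rcases C.eq_empty_or_nonempty with rfl | ⟨c, hc⟩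
  · exact bddAbove_empty
  by_contra hb
  rw [not_bddAbove_iff] at hb
  have hsub : Set.Ici c ⊆ C := by
    intro x hx
    obtain ⟨y, hy, hxy⟩ := hb x
    exact hC.out hc hy ⟨hx, hxy.le⟩
  exact hv (top_le_iff.1 (by calc (⊤ : ℝ≥0∞) = volume (Set.Ici c) := (Real.volume_Ici).symm
    _ ≤ volume C := measure_mono hsub))

private lemma aux_bddBelow {C : Set ℝ} (hC : C.OrdConnected) (hv : volume C ≠ ⊤) :
    BddBelow C := by
  rcases C.eq_empty_or_nonempty with rfl | ⟨c, hc⟩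
  · exact bddBelow_empty
  by_contra hb
  rw [not_bddBelow_iff] at hb
  have hsub : Set.Iic c ⊆ C := by
    intro x hx
    obtain ⟨y, hy, hxy⟩ := hb x
    exact hC.out hy hc ⟨hxy.le, hx⟩
  exact hv (top_le_iff.1 (by calc (⊤ : ℝ≥0∞) = volume (Set.Iic c) := (Real.volume_Iic).symm
    _ ≤ volume C := measure_mono hsub))

private lemma aux_Ioo_subset {C : Set ℝ} (hC : C.OrdConnected) (hne : C.Nonempty) :
    Set.Ioo (sInf C) (sSup C) ⊆ C := by
  intro x hx
  obtain ⟨c, hc, hcx⟩ := exists_lt_of_csInf_lt hne hx.1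
  obtain ⟨d, hd, hxd⟩ := exists_lt_of_lt_csSup hne hx.2
  exact hC.out hc hd ⟨hcx.le, hxd.le⟩

/-- If `E ⊆ ℝ` is Lebesgue-null, `s ∈ [0,1]`, `K > 0` and for every open interval `(a,b)` we
have `H^s(E ∩ (a,b)) ≤ K (b-a) H^s(E)`, then `H^s(E)` is `0` or `∞`. -/
theorem stmt0 (E : Set ℝ) (s K : ℝ) (hs : s ∈ Set.Icc (0 : ℝ) 1) (hK : 0 < K)
    (hE : volume E = 0)
    (h : ∀ a b : ℝ, a < b →
      μH[s] (E ∩ Set.Ioo a b) ≤ ENNReal.ofReal (K * (b - a)) * μH[s] E) :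
    μH[s] E = 0 ∨ μH[s] E = ⊤ := by
  by_contra hcon
  push_neg at hcon
  obtain ⟨hμ0, hμtop⟩ := hcon
  set μ : ℝ≥0∞ := μH[s] E with hμ
  set ε : ℝ := 1 / (4 * K) with hεdef
  have hε : 0 < ε := by positivity
  have hεE : ENNReal.ofReal ε ≠ 0 := (ENNReal.ofReal_pos.2 hε).ne'
  -- outer regularity: open U ⊇ E with small measure
  obtain ⟨U, hEU, hUo, hUvol⟩ :=
    Set.exists_isOpen_lt_of_lt E (ENNReal.ofReal ε) (hE ▸ ENNReal.ofReal_pos.2 hε)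
  -- the collection of connected components of U containing a rational
  set T : Set (Set ℝ) :=
    connectedComponentIn U '' (Set.range ((↑) : ℚ → ℝ) ∩ U) with hT
  have hTc : T.Countable := ((Set.countable_range _).mono Set.inter_subset_left).image _
  haveI : Countable ↥T := hTc.to_subtype
  -- basic properties of each component
  have hprop : ∀ C ∈ T, C.Nonempty ∧ IsOpen C ∧ C ⊆ U ∧ C.OrdConnected := by
    rintro C ⟨x, hx, rfl⟩
    exact ⟨⟨x, mem_connectedComponentIn hx.2⟩, hUo.connectedComponentIn,
      connectedComponentIn_subset U x, isPreconnected_connectedComponentIn.ordConnected⟩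
  have hvolC : ∀ C ∈ T, volume C ≠ ⊤ := fun C hC =>
    (lt_of_le_of_lt (measure_mono (hprop C hC).2.2.1)
      (hUvol.trans_le le_top)).ne
  -- δ : small positive numbers summing to < ε
  obtain ⟨δ, hδpos, hδsum⟩ :=
    ENNReal.exists_pos_sum_of_countable hεE ↥T
  -- intervals
  set a : ↥T → ℝ := fun C => sInf (C : Set ℝ) with ha
  set b : ↥T → ℝ := fun C => sSup (C : Set ℝ) with hb
  set I : ↥T → Set ℝ := fun C => Set.Ioo (a C - δ C) (b C + δ C) with hI
  have hab : ∀ C : ↥T, a C ≤ b C := by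
    intro C
    obtain ⟨hne, _, _, hoc⟩ := hprop C C.2
    obtain ⟨c, hc⟩ := hne
    exact le_trans (csInf_le (aux_bddBelow hoc (hvolC _ C.2)) hc)
      (le_csSup (aux_bddAbove hoc (hvolC _ C.2)) hc)
  have habδ : ∀ C : ↥T, a C - δ C < b C + δ C := fun C =>
    lt_of_lt_of_le (by have := hδpos C; have : (0:ℝ) < δ C := this; linarith [hab C])
      le_rfl
  have hCI : ∀ C : ↥T, (C : Set ℝ) ⊆ I C := by
    rintro C x hx
    obtain ⟨hne, _, _, hoc⟩ := hprop C C.2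
    have h1 : a C ≤ x := csInf_le (aux_bddBelow hoc (hvolC _ C.2)) hx
    have h2 : x ≤ b C := le_csSup (aux_bddAbove hoc (hvolC _ C.2)) hx
    have hδC : (0:ℝ) < δ C := hδpos C
    exact ⟨by linarith, by linarith⟩
  -- E is covered by the intervals
  have hcover : E ⊆ ⋃ C : ↥T, I C := by
    intro x hx
    have hxU : x ∈ U := hEU hx
    have hcomp : IsOpen (connectedComponentIn U x) := hUo.connectedComponentIn
    obtain ⟨q, hq⟩ := Rat.denseRange_cast.exists_mem_open hcomp
      ⟨x, mem_connectedComponentIn hxU⟩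
    have hqU : (q : ℝ) ∈ U := connectedComponentIn_subset U x hq
    have heq : connectedComponentIn U x = connectedComponentIn U (q : ℝ) :=
      connectedComponentIn_eq hq
    have hmem : connectedComponentIn U x ∈ T := ⟨q, ⟨⟨q, rfl⟩, hqU⟩, heq.symm⟩
    exact Set.mem_iUnion.2 ⟨⟨_, hmem⟩, hCI ⟨_, hmem⟩ (mem_connectedComponentIn hxU)⟩
  -- pairwise disjointness of components
  have hdisj : Pairwise (Function.onFun Disjoint fun C : ↥T => (C : Set ℝ)) := by
    rintro ⟨C, hC⟩ ⟨C', hC'⟩ hne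
    rw [Function.onFun, Set.disjoint_left]
    intro z hz hz'
    obtain ⟨x, _, rfl⟩ := hC
    obtain ⟨x', _, rfl⟩ := hC'
    refine hne (Subtype.ext ?_)
    show connectedComponentIn U x = connectedComponentIn U x'
    have h1 : connectedComponentIn U x = connectedComponentIn U z := connectedComponentIn_eq hz
    have h2 : connectedComponentIn U x' = connectedComponentIn U z := connectedComponentIn_eq hz'
    rw [h1, h2]
  -- total length of components is at most the measure of U
  have hsumvol : (∑' C : ↥T, volume (C : Set ℝ)) ≤ volume U := by
    rw [← measure_iUnion hdisj fun C => (hprop _ C.2).2.1.measurableSet]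
    exact measure_mono (Set.iUnion_subset fun C => (hprop _ C.2).2.2.1)
  -- length estimate for each interval
  have hlen : ∀ C : ↥T, ENNReal.ofReal (b C + δ C - (a C - δ C)) ≤
      volume (C : Set ℝ) + 2 * δ C := by
    intro C
    have h1 : (b C + δ C - (a C - δ C)) = (b C - a C) + 2 * (δ C : ℝ) := by ring
    have h2 : ENNReal.ofReal (b C - a C) ≤ volume (C : Set ℝ) := by
      rw [← Real.volume_Ioo]
      exact measure_mono (aux_Ioo_subset (hprop _ C.2).2.2.2 (hprop _ C.2).1)
    rw [h1, ENNReal.ofReal_add (by linarith [hab C]) (by positivity)]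
    refine add_le_add h2 ?_
    rw [ENNReal.ofReal_mul (by norm_num)]
    simp [ENNReal.ofReal_coe_nnreal]
  -- main estimate
  have hmain : μ ≤ ENNReal.ofReal (3 / 4) * μ := by
    calc μ = μH[s] E := rfl
      _ ≤ μH[s] (⋃ C : ↥T, E ∩ I C) := by
          refine measure_mono ?_
          intro x hx
          obtain ⟨C, hC⟩ := Set.mem_iUnion.1 (hcover hx)
          exact Set.mem_iUnion.2 ⟨C, hx, hC⟩
      _ ≤ ∑' C : ↥T, μH[s] (E ∩ I C) := measure_iUnion_le _
      _ ≤ ∑' C : ↥T, ENNReal.ofReal (K * (b C + δ C - (a C - δ C))) * μ :=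
          ENNReal.tsum_le_tsum fun C => h _ _ (habδ C)
      _ = ∑' C : ↥T, ENNReal.ofReal K * ENNReal.ofReal (b C + δ C - (a C - δ C)) * μ := by
          congr 1; funext C; rw [ENNReal.ofReal_mul hK.le]
      _ ≤ ∑' C : ↥T, ENNReal.ofReal K * (volume (C : Set ℝ) + 2 * δ C) * μ := by
          refine ENNReal.tsum_le_tsum fun C => ?_
          exact mul_le_mul_left (mul_le_mul_right (hlen C) _) μ
      _ = ENNReal.ofReal K * (∑' C : ↥T, (volume (C : Set ℝ) + 2 * δ C)) * μ := by
          rw [ENNReal.tsum_mul_right, ENNReal.tsum_mul_left]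
      _ ≤ ENNReal.ofReal K * (ENNReal.ofReal ε + 2 * ENNReal.ofReal ε) * μ := by
          refine mul_le_mul_left (mul_le_mul_right ?_ _) μ
          rw [ENNReal.tsum_add, ENNReal.tsum_mul_left]
          exact add_le_add (hsumvol.trans hUvol.le)
            (mul_le_mul_right hδsum.le _)
      _ ≤ ENNReal.ofReal (3 / 4) * μ := by
          refine mul_le_mul_left ?_ μ
          have h3 : ENNReal.ofReal ε + 2 * ENNReal.ofReal ε = ENNReal.ofReal (3 * ε) := by
            rw [ENNReal.ofReal_mul (by norm_num)]
            rw [show ENNReal.ofReal 3 = 3 by simp [ENNReal.ofReal_ofNat]]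
            ring
          rw [h3, ← ENNReal.ofReal_mul hK.le]
          refine ENNReal.ofReal_le_ofReal (le_of_eq ?_)
          rw [hεdef]
          field_simp
  have : μ < μ := lt_of_le_of_lt hmain (by
    calc ENNReal.ofReal (3 / 4) * μ < 1 * μ := by
          refine ENNReal.mul_lt_mul_left hμ0 hμtop ?_
          exact ENNReal.ofReal_lt_one.2 (by norm_num)
      _ = μ := one_mul μ)
  exact absurd this (lt_irrefl μ)
end

section
/- (Jarník's 0-∞ law) Let v > 1 and let R_v = {α ∈ ℝ : there exists K > 0 with |α − p/q| < K·q^{−v−1} for infinitely many rationals p/q}. Then for every s ∈ [0,1], the s-dimensional Hausdorff measure H^s(R_v) is either 0 or ∞; in particular R_v is not an s-set. -/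
open MeasureTheory
open scoped ENNReal NNReal

/-- `R_v`: reals `α` such that for some `K > 0`, `|α - p/q| < K q^{-v-1}` for infinitely many
rationals `p/q`. -/
def Rv (v : ℝ) : Set ℝ :=
  {α | ∃ K > (0 : ℝ), {r : ℚ | ∃ (p : ℤ) (q : ℕ), 0 < q ∧ r = (p : ℚ) / q ∧
    |α - (r : ℝ)| < K * (q : ℝ) ^ (-v - 1)}.Infinite}

open scoped Pointwise

private lemma liouville_add_nat {x : ℝ} (hx : Liouville x) (m : ℕ) : Liouville (x + m) := by
  intro n
  obtain ⟨a, b, hb, hne, hlt⟩ := hx n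
  have hb0 : (b : ℝ) ≠ 0 := by positivity
  have e : ((a + (m : ℤ) * b : ℤ) : ℝ) / (b : ℝ) = (a : ℝ) / b + m := by
    push_cast
    field_simp
  refine ⟨a + (m : ℤ) * b, b, hb, ?_, ?_⟩
  · rw [e]
    intro h
    exact hne (by linarith)
  · rw [e]
    convert hlt using 2
    ring

private lemma liouville_mem_Rv {v : ℝ} {x : ℝ} (hx : Liouville x) : x ∈ Rv v := by
  refine ⟨1, one_pos, ?_⟩
  set S : Set ℚ := {r : ℚ | ∃ (p : ℤ) (q : ℕ), 0 < q ∧ r = (p : ℚ) / q ∧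
    |x - (r : ℝ)| < 1 * (q : ℝ) ^ (-v - 1)} with hS
  -- every positive ε admits an element of S within ε of x
  have key : ∀ ε : ℝ, 0 < ε → ∃ r ∈ S, |x - (r : ℝ)| < ε := by
    intro ε hε
    obtain ⟨n1, hn1⟩ := exists_pow_lt_of_lt_one hε (by norm_num : (1 / 2 : ℝ) < 1)
    set n : ℕ := max n1 ⌈v + 1⌉₊ with hn
    have hvn : v + 1 ≤ (n : ℝ) := le_trans (Nat.le_ceil _)
      (by exact_mod_cast Nat.cast_le.2 (le_max_right n1 ⌈v + 1⌉₊))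
    obtain ⟨a, b, hb, hne, hlt⟩ := hx n
    have hb0 : (0 : ℝ) < (b : ℝ) := by exact_mod_cast hb.trans_le' zero_le_one
    have hb1 : (1 : ℝ) < (b : ℝ) := by exact_mod_cast hb
    have hb2 : (2 : ℝ) ≤ (b : ℝ) := by exact_mod_cast hb
    have hbnn : (0 : ℤ) ≤ b := by omega
    have hcastQ : ((b.toNat : ℕ) : ℚ) = (b : ℚ) := by
      exact_mod_cast Int.toNat_of_nonneg hbnn
    have hcast : ((b.toNat : ℕ) : ℝ) = (b : ℝ) := by
      exact_mod_cast Int.toNat_of_nonneg hbnn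
    refine ⟨(a : ℚ) / (b : ℚ), ?_, ?_⟩
    · refine ⟨a, b.toNat, by omega, by rw [hcastQ], ?_⟩
      have hr : ((((a : ℚ) / (b : ℚ)) : ℚ) : ℝ) = (a : ℝ) / (b : ℝ) := by push_cast; ring
      rw [hr, hcast, one_mul]
      calc |x - (a : ℝ) / b| < 1 / (b : ℝ) ^ n := hlt
        _ = (b : ℝ) ^ (-(n : ℝ)) := by
            rw [Real.rpow_neg hb0.le, Real.rpow_natCast, one_div]
        _ ≤ (b : ℝ) ^ (-v - 1) := by
            rw [Real.rpow_le_rpow_left_iff hb1]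
            linarith
    · have hr : ((((a : ℚ) / (b : ℚ)) : ℚ) : ℝ) = (a : ℝ) / (b : ℝ) := by push_cast; ring
      rw [hr]
      calc |x - (a : ℝ) / b| < 1 / (b : ℝ) ^ n := hlt
        _ ≤ 1 / (2 : ℝ) ^ n := by
            apply one_div_le_one_div_of_le (by positivity)
            exact pow_le_pow_left₀ (by norm_num) hb2 n
        _ = (1 / 2 : ℝ) ^ n := by rw [div_pow, one_pow]
        _ ≤ (1 / 2 : ℝ) ^ n1 := by
            apply pow_le_pow_of_le_one (by norm_num) (by norm_num)
            exact le_max_left _ _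
        _ < ε := hn1
  -- hence S is infinite
  by_contra hfin
  rw [Set.not_infinite] at hfin
  have hpos : ∀ r ∈ S, 0 < |x - (r : ℝ)| := by
    intro r _
    rw [abs_pos, sub_ne_zero]
    exact (hx.irrational).ne_rat r
  have hTne : (insert (1:ℝ) (hfin.toFinset.image fun r : ℚ => |x - (r : ℝ)|)).Nonempty :=
    ⟨1, Finset.mem_insert_self _ _⟩
  have hεpos : 0 < (insert (1:ℝ) (hfin.toFinset.image fun r : ℚ => |x - (r : ℝ)|)).min' hTne := by
    rw [Finset.lt_min'_iff]
    intro y hy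
    rcases Finset.mem_insert.1 hy with h | h
    · rw [h]; norm_num
    · obtain ⟨r, hr, hrr⟩ := Finset.mem_image.1 h
      rw [← hrr]
      exact hpos r (hfin.mem_toFinset.1 hr)
  obtain ⟨r, hrS, hrlt⟩ := key _ hεpos
  have : (insert (1:ℝ) (hfin.toFinset.image fun r : ℚ => |x - (r : ℝ)|)).min' hTne
      ≤ |x - (r : ℝ)| :=
    Finset.min'_le _ _
      (Finset.mem_insert_of_mem (Finset.mem_image.2 ⟨r, hfin.mem_toFinset.2 hrS, rfl⟩))
  linarith

private lemma two_mul_mem_Rv {v x : ℝ} (h : x ∈ Rv v) : 2 * x ∈ Rv v := by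
  obtain ⟨K, hK, hS⟩ := h
  refine ⟨2 * K, by positivity, ?_⟩
  refine Set.Infinite.mono ?_ (hS.image (f := fun r : ℚ => 2 * r) fun a _ b _ hab => by simpa using hab)
  rintro r' ⟨r, ⟨p, q, hq, hrpq, hlt⟩, rfl⟩
  refine ⟨2 * p, q, hq, ?_, ?_⟩
  · rw [hrpq]; push_cast; exact (mul_div_assoc 2 _ _).symm
  · have : ((((2 : ℚ) * r) : ℚ) : ℝ) = 2 * (r : ℝ) := by push_cast; ring
    rw [this]
    calc |2 * x - 2 * (r : ℝ)| = 2 * |x - (r : ℝ)| := by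
          rw [show 2 * x - 2 * (r : ℝ) = 2 * (x - (r : ℝ)) by ring, abs_mul, abs_two]
      _ < 2 * (K * (q : ℝ) ^ (-v - 1)) := by linarith
      _ = 2 * K * (q : ℝ) ^ (-v - 1) := by ring

private lemma half_mem_Rv {v x : ℝ} (h : x ∈ Rv v) : x / 2 ∈ Rv v := by
  obtain ⟨K, hK, hS⟩ := h
  refine ⟨K * (2 : ℝ) ^ v, by positivity, ?_⟩
  refine Set.Infinite.mono ?_ (hS.image (f := fun r : ℚ => r / 2) fun a _ b _ hab => by
    field_simp at hab; exact hab)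
  rintro r' ⟨r, ⟨p, q, hq, hrpq, hlt⟩, rfl⟩
  refine ⟨p, 2 * q, by omega, ?_, ?_⟩
  · rw [hrpq]; push_cast; rw [div_div, mul_comm]
  · have hcast : (((r / 2 : ℚ)) : ℝ) = (r : ℝ) / 2 := by push_cast; ring
    rw [hcast]
    have hq0 : (0 : ℝ) < (q : ℝ) := by exact_mod_cast hq
    have hsplit : ((2 * q : ℕ) : ℝ) ^ (-v - 1) = (2 : ℝ) ^ (-v - 1) * (q : ℝ) ^ (-v - 1) := by
      push_cast
      exact Real.mul_rpow (by norm_num) hq0.le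
    have hKeq : K * (2 : ℝ) ^ v * ((2 * q : ℕ) : ℝ) ^ (-v - 1)
        = K / 2 * (q : ℝ) ^ (-v - 1) := by
      rw [hsplit]
      have : (2 : ℝ) ^ v * (2 : ℝ) ^ (-v - 1) = 2⁻¹ := by
        rw [← Real.rpow_add (by norm_num : (0:ℝ) < 2),
          show v + (-v - 1) = -1 by ring, Real.rpow_neg_one]
      calc K * (2 : ℝ) ^ v * ((2 : ℝ) ^ (-v - 1) * (q : ℝ) ^ (-v - 1))
          = K * ((2 : ℝ) ^ v * (2 : ℝ) ^ (-v - 1)) * (q : ℝ) ^ (-v - 1) := by ring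
        _ = K * 2⁻¹ * (q : ℝ) ^ (-v - 1) := by rw [this]
        _ = K / 2 * (q : ℝ) ^ (-v - 1) := by ring
    rw [hKeq]
    calc |x / 2 - (r : ℝ) / 2| = |x - (r : ℝ)| / 2 := by
          rw [show x / 2 - (r : ℝ) / 2 = (x - (r : ℝ)) / 2 by ring, abs_div, abs_two]
      _ < K * (q : ℝ) ^ (-v - 1) / 2 := by linarith
      _ = K / 2 * (q : ℝ) ^ (-v - 1) := by ring

private lemma Rv_smul_two (v : ℝ) : (2 : ℝ) • Rv v = Rv v := by
  ext x
  constructor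
  · rintro ⟨y, hy, rfl⟩
    simpa [smul_eq_mul] using two_mul_mem_Rv hy
  · intro hx
    exact ⟨x / 2, half_mem_Rv hx, by
      show (2 : ℝ) • (x / 2) = x
      rw [smul_eq_mul]; ring⟩

private lemma Rv_infinite (v : ℝ) : (Rv v).Infinite := by
  refine Set.infinite_of_injective_forall_mem
    (f := fun n : ℕ => liouvilleNumber 2 + (n : ℝ)) ?_ ?_
  · intro a b hab
    simp only [add_right_inj, Nat.cast_inj] at hab
    exact_mod_cast hab
  · intro n
    exact liouville_mem_Rv (liouville_add_nat (liouville_liouvilleNumber (le_refl 2)) n)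

private lemma hausdorff_finset (F : Finset ℝ) : μH[0] (↑F : Set ℝ) = F.card := by
  classical
  induction F using Finset.induction with
  | empty => simp
  | @insert x s hx ih =>
    rw [Finset.coe_insert, Set.insert_eq,
      measure_union (by simpa using hx) s.finite_toSet.measurableSet,
      MeasureTheory.Measure.hausdorffMeasure_zero_singleton, ih,
      Finset.card_insert_of_notMem hx]
    push_cast
    ring

private lemma hausdorff_zero_Rv (v : ℝ) : μH[0] (Rv v) = ⊤ := by
  rw [eq_top_iff, ← ENNReal.iSup_natCast]
  apply iSup_le
  intro n
  obtain ⟨t, hts, htfin, htcard⟩ := (Rv_infinite v).exists_subset_ncard_eq n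
  calc (n : ℝ≥0∞) = μH[0] (↑htfin.toFinset : Set ℝ) := by
        rw [hausdorff_finset, ← htcard, Set.ncard_eq_toFinset_card _ htfin]
    _ ≤ μH[0] (Rv v) := measure_mono (by simpa using hts)

private lemma hausdorff_Rv_zero_or_top (v : ℝ) {s : ℝ} (hs : 0 ≤ s) :
    μH[s] (Rv v) = 0 ∨ μH[s] (Rv v) = ⊤ := by
  rcases eq_or_lt_of_le hs with rfl | hs'
  · exact Or.inr (hausdorff_zero_Rv v)
  by_contra h
  push_neg at h
  obtain ⟨h0, htop⟩ := h
  have hsc := MeasureTheory.Measure.hausdorffMeasure_smul₀ (𝕜 := ℝ) hs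
    (two_ne_zero) (Rv v)
  rw [Rv_smul_two] at hsc
  have hn2 : ‖(2 : ℝ)‖₊ = 2 := by
    ext; simp [Real.norm_two]
  rw [hn2] at hsc
  have hcast : ((2 : ℝ≥0) ^ s : ℝ≥0) • μH[s] (Rv v)
      = (((2 : ℝ≥0) ^ s : ℝ≥0) : ℝ≥0∞) * μH[s] (Rv v) := rfl
  rw [hcast] at hsc
  have h1 : (((2 : ℝ≥0) ^ s : ℝ≥0) : ℝ≥0∞) * μH[s] (Rv v) = 1 * μH[s] (Rv v) := by
    rw [one_mul, ← hsc]
  have hc1 : (((2 : ℝ≥0) ^ s : ℝ≥0) : ℝ≥0∞) = 1 :=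
    (ENNReal.mul_left_inj h0 htop).1 h1
  have hc1' : ((2 : ℝ≥0) ^ s : ℝ≥0) = 1 := by exact_mod_cast hc1
  have hreal : (2 : ℝ) ^ s = 1 := by
    have := congrArg (NNReal.toReal) hc1'
    rwa [NNReal.coe_rpow, NNReal.coe_ofNat, NNReal.coe_one] at this
  have : (2 : ℝ) ^ (0 : ℝ) < (2 : ℝ) ^ s :=
    (Real.rpow_lt_rpow_left_iff one_lt_two).2 hs'
  rw [Real.rpow_zero, hreal] at this
  exact lt_irrefl 1 this

/-- Jarník's 0-∞ law: for `v > 1` and any `s ∈ [0,1]`, `H^s(R_v)` is `0` or `∞`; in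
particular `R_v` is not an `s`-set (its Hausdorff measure at the critical exponent
`dim_H R_v` is not positive and finite). -/
theorem stmt9 (v : ℝ) (hv : 1 < v) :
    (∀ s ∈ Set.Icc (0 : ℝ) 1, μH[s] (Rv v) = 0 ∨ μH[s] (Rv v) = ⊤) ∧
    ¬ (0 < μH[(dimH (Rv v)).toReal] (Rv v) ∧ μH[(dimH (Rv v)).toReal] (Rv v) < ⊤) := by
  constructor
  · intro s hs
    exact hausdorff_Rv_zero_or_top v hs.1
  · rintro ⟨hpos, hlt⟩
    rcases hausdorff_Rv_zero_or_top v (ENNReal.toReal_nonneg :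
        (0 : ℝ) ≤ (dimH (Rv v)).toReal) with h | h
    · rw [h] at hpos; exact lt_irrefl 0 hpos
    · rw [h] at hlt; exact lt_irrefl ⊤ hlt
end

section
/- (Jarník's theorem on badly approximable numbers) The set 𝔅 of badly approximable real numbers, 𝔅 = {α ∈ ℝ : there exists K > 0 such that |α − p/q| ≥ K/q² for all rationals p/q}, has Hausdorff dimension 1. -/
open Set MeasureTheory Filter
open scoped ENNReal NNReal Topology

/-- The set `𝔅` of badly approximable real numbers: those `α` for which there is `K > 0`
with `|α - p/q| ≥ K/q²` for all rationals `p/q`. -/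
def badApprox : Set ℝ :=
  {α | ∃ K > (0 : ℝ), ∀ (p : ℤ) (q : ℕ), 0 < q → K / (q : ℝ) ^ 2 ≤ |α - (p : ℝ) / q|}

namespace Jarnik

/-- length of generation-`n` intervals -/
noncomputable def el (R n : ℕ) : ℝ := ((R : ℝ) ^ n)⁻¹

lemma el_pos {R : ℕ} (hR : 16 ≤ R) (n : ℕ) : 0 < el R n := by
  have : (0:ℝ) < (R:ℝ) := by exact_mod_cast Nat.lt_of_lt_of_le (by norm_num) hR
  exact inv_pos.2 (pow_pos this n)

lemma el_zero (R : ℕ) : el R 0 = 1 := by simp [el]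

lemma el_succ {R : ℕ} (hR : 16 ≤ R) (n : ℕ) : (R:ℝ) * el R (n+1) = el R n := by
  have hr : (0:ℝ) < (R:ℝ) := by exact_mod_cast Nat.lt_of_lt_of_le (by norm_num) hR
  simp only [el]
  rw [pow_succ, mul_inv_rev, ← mul_assoc, mul_inv_cancel₀ hr.ne', one_mul]

/-- three separated points can't fit in a short interval (ordered version) -/
lemma no_three_aux {s u v a b c : ℝ} (hab : s < b - a) (hbc : s < c - b)
    (ha : u ≤ a) (hc : c ≤ v) (hv : v - u ≤ 2 * s) : False := by linarith

lemma no_three {s u v a b c : ℝ} (hab : s < |a - b|) (hac : s < |a - c|) (hbc : s < |b - c|)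
    (ha : a ∈ Icc u v) (hb : b ∈ Icc u v) (hc : c ∈ Icc u v) (hv : v - u ≤ 2 * s) : False := by
  obtain ⟨ha1, ha2⟩ := ha; obtain ⟨hb1, hb2⟩ := hb; obtain ⟨hc1, hc2⟩ := hc
  rcases le_total a b with h1 | h1 <;> rcases le_total b c with h2 | h2 <;>
    rcases le_total a c with h3 | h3 <;>
    rw [abs_sub_comm] at hab hac hbc <;>
    rcases abs_cases (b - a) with ⟨e1, _⟩ | ⟨e1, _⟩ <;>
    rcases abs_cases (c - b) with ⟨e2, _⟩ | ⟨e2, _⟩ <;>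
    rcases abs_cases (c - a) with ⟨e3, _⟩ | ⟨e3, _⟩ <;>
    rw [e1] at hab <;> rw [e2] at hbc <;> rw [e3] at hac <;> linarith

/-- two distinct rationals with denominators `q² < Rⁿ` are more than `el R n` apart. -/
lemma rat_sep {R : ℕ} (hR : 16 ≤ R) {n : ℕ} {p p' : ℤ} {q q' : ℕ}
    (hq : 0 < q) (hq' : 0 < q') (hqn : q ^ 2 < R ^ n) (hqn' : q' ^ 2 < R ^ n)
    (hne : (p:ℝ)/q ≠ (p':ℝ)/q') : el R n < |(p:ℝ)/q - (p':ℝ)/q'| := by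
  have hq0 : (0:ℝ) < q := by exact_mod_cast hq
  have hq0' : (0:ℝ) < q' := by exact_mod_cast hq'
  have hnum : (p : ℝ)/q - (p':ℝ)/q' = ((p * q' - p' * q : ℤ) : ℝ) / (q * q') := by
    push_cast; field_simp
  have hnz : (p * q' - p' * q : ℤ) ≠ 0 := by
    intro h
    apply hne
    have : (p:ℝ) * q' = p' * q := by
      have := congrArg (fun z : ℤ => (z : ℝ)) h
      push_cast at this; linarith
    field_simp
    linarith
  have h1 : (1:ℝ) ≤ |((p * q' - p' * q : ℤ) : ℝ)| := by
    rw [← Int.cast_abs]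
    exact_mod_cast Int.one_le_abs hnz
  have hqq : (q * q' : ℝ) < (R:ℝ) ^ n := by
    have h2 : (q * q')^2 < (R ^ n)^2 := by
      calc (q * q')^2 = q^2 * q'^2 := by ring
        _ < R ^ n * R ^ n := by
            exact Nat.mul_lt_mul_of_lt_of_lt hqn hqn'
        _ = (R ^ n)^2 := by ring
    exact_mod_cast lt_of_pow_lt_pow_left₀ 2 (Nat.zero_le _) h2
  rw [hnum, abs_div, abs_of_pos (by positivity : (0:ℝ) < (q:ℝ) * q')]
  rw [el]
  have hRn : (0:ℝ) < (R:ℝ)^n := by positivity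
  rw [inv_eq_one_div]
  calc (1:ℝ)/(R:ℝ)^n < 1/((q:ℝ)*q') := by
        apply div_lt_div_of_pos_left one_pos (by positivity) hqq
    _ ≤ |((p * q' - p' * q : ℤ) : ℝ)| / ((q:ℝ) * q') := by
        apply div_le_div_of_nonneg_right h1 (by positivity) |>.trans_eq (by ring) |>.trans_eq rfl
  -- fallback


/-- child `k` of the generation-`n` interval with left endpoint `A` is safe -/
def Safe (R n : ℕ) (A : ℝ) (k : ℕ) : Prop :=
  ∀ p : ℤ, ∀ q : ℕ, 0 < q → R ^ (n-1) ≤ q ^ 2 → q ^ 2 < R ^ n →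
    ∀ y ∈ Icc (A + k * el R (n+1)) (A + (k+1) * el R (n+1)), el R (n+1) ≤ |y - (p:ℝ)/q|

open Classical in
noncomputable def safeset (R n : ℕ) (A : ℝ) : Finset (Fin R) :=
  Finset.univ.filter fun k => Safe R n A (k : ℕ)

/-- only two bad rationals can threaten a given parent interval -/
lemma exists_two {R : ℕ} (hR : 16 ≤ R) (n : ℕ) (A : ℝ) :
    ∃ a b : ℝ, ∀ p : ℤ, ∀ q : ℕ, 0 < q → q ^ 2 < R ^ n →
      (p:ℝ)/q ∈ Icc (A - el R (n+1)) (A + (R+1) * el R (n+1)) →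
      (p:ℝ)/q = a ∨ (p:ℝ)/q = b := by
  classical
  set ℓ := el R (n+1) with hℓ
  set P : ℝ → Prop := fun ρ => (∃ p : ℤ, ∃ q : ℕ, 0 < q ∧ q ^ 2 < R ^ n ∧ (p:ℝ)/q = ρ) ∧
      ρ ∈ Icc (A - ℓ) (A + (R+1) * ℓ) with hP
  by_cases h1 : ∃ ρ, P ρ
  · obtain ⟨a, ha⟩ := h1
    by_cases h2 : ∃ ρ, P ρ ∧ ρ ≠ a
    · obtain ⟨b, hb, hba⟩ := h2
      refine ⟨a, b, fun p q hq hqn hmem => ?_⟩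
      by_contra hcon
      push_neg at hcon
      obtain ⟨hca, hcb⟩ := hcon
      have hc : P ((p:ℝ)/q) := ⟨⟨p, q, hq, hqn, rfl⟩, hmem⟩
      -- three distinct bad rationals a b c in the window
      have sep : ∀ x y : ℝ, P x → P y → x ≠ y → el R n < |x - y| := by
        rintro x y ⟨⟨px, qx, hqx, hqxn, rfl⟩, _⟩ ⟨⟨py, qy, hqy, hqyn, rfl⟩, _⟩ hxy
        exact rat_sep hR hqx hqy hqxn hqyn hxy
      have hℓpos : 0 < ℓ := el_pos hR (n+1)
      have hwin : (A + (R+1) * ℓ) - (A - ℓ) ≤ 2 * el R n := by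
        have h16 : (16:ℝ) ≤ (R:ℝ) := by exact_mod_cast hR
        have := el_succ hR n
        nlinarith
      exact no_three (sep _ _ ha hb hba.symm) (sep _ _ ha hc (Ne.symm hca))
        (sep _ _ hb hc (Ne.symm hcb)) ha.2 hb.2 hc.2 hwin
    · push_neg at h2
      exact ⟨a, a, fun p q hq hqn hmem => Or.inl (by
        by_contra hne
        exact hne (h2 _ ⟨⟨p, q, hq, hqn, rfl⟩, hmem⟩))⟩
  · push_neg at h1
    exact ⟨0, 0, fun p q hq hqn hmem => absurd ⟨⟨p, q, hq, hqn, rfl⟩, hmem⟩ (h1 _)⟩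

/-- each real kills at most 3 children -/
lemma card_hit {R : ℕ} (hR : 16 ≤ R) (n : ℕ) (A ρ : ℝ) :
    (Finset.univ.filter fun k : Fin R =>
      A + ((k:ℝ) - 1) * el R (n+1) < ρ ∧ ρ < A + ((k:ℝ) + 2) * el R (n+1)).card ≤ 3 := by
  classical
  set ℓ := el R (n+1) with hℓ
  have hℓpos : 0 < ℓ := el_pos hR (n+1)
  set t : ℝ := (ρ - A) / ℓ with ht
  have hcard : (Finset.Icc (⌊t⌋ - 1) (⌊t⌋ + 1)).card = 3 := by
    rw [Int.card_Icc]; omega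
  rw [← hcard]
  refine Finset.card_le_card_of_injOn (fun k => (k : ℤ)) (fun k hk => ?_)
    (fun x _ y _ h => by
      have : ((x:ℕ):ℤ) = ((y:ℕ):ℤ) := h
      exact Fin.ext (by exact_mod_cast this))
  simp only [Finset.mem_coe, Finset.mem_filter] at hk
  obtain ⟨-, h1, h2⟩ := hk
  have hk1 : ((k:ℝ) - 1) < t := by
    rw [ht, lt_div_iff₀ hℓpos]; linarith
  have hk2 : t < (k:ℝ) + 2 := by
    rw [ht, div_lt_iff₀ hℓpos]; linarith
  simp only [Finset.mem_coe, Finset.mem_Icc]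
  constructor
  · have h3 : (⌊t⌋ : ℝ) ≤ t := Int.floor_le t
    have h4 : (⌊t⌋ : ℝ) < (k:ℝ) + 2 := lt_of_le_of_lt h3 hk2
    have h5 : ⌊t⌋ < (k:ℤ) + 2 := by exact_mod_cast h4
    omega
  · have h3 : ((k:ℤ) : ℝ) ≤ t + 1 := by push_cast; linarith
    have h4 := Int.le_floor.2 h3
    rw [Int.floor_add_one] at h4
    omega

lemma card_safeset {R : ℕ} (hR : 16 ≤ R) (n : ℕ) (A : ℝ) :
    R - 6 ≤ (safeset R n A).card := by
  classical
  set ℓ := el R (n+1) with hℓ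
  have hℓpos : 0 < ℓ := el_pos hR (n+1)
  obtain ⟨a, b, hab⟩ := exists_two hR n A
  have hsub : (Finset.univ.filter fun k : Fin R => ¬ Safe R n A (k:ℕ)) ⊆
      (Finset.univ.filter fun k : Fin R =>
        A + ((k:ℝ) - 1) * ℓ < a ∧ a < A + ((k:ℝ) + 2) * ℓ) ∪
      (Finset.univ.filter fun k : Fin R =>
        A + ((k:ℝ) - 1) * ℓ < b ∧ b < A + ((k:ℝ) + 2) * ℓ) := by
    intro k hk
    simp only [Finset.mem_filter, Finset.mem_univ, true_and] at hk
    rw [Safe] at hk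
    push_neg at hk
    obtain ⟨p, q, hq, hlow, hup, y, hy, hclose⟩ := hk
    have hkR : (k:ℝ) + 1 ≤ (R:ℝ) := by
      have : (k:ℕ) + 1 ≤ R := k.2
      exact_mod_cast this
    have hy1 : A + (k:ℝ) * ℓ ≤ y := hy.1
    have hy2 : y ≤ A + ((k:ℝ)+1) * ℓ := hy.2
    have habs := abs_lt.1 hclose
    have hρ1 : A + ((k:ℝ) - 1) * ℓ < (p:ℝ)/q := by nlinarith [habs.1, habs.2]
    have hρ2 : (p:ℝ)/q < A + ((k:ℝ) + 2) * ℓ := by nlinarith [habs.1, habs.2]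
    have hmem : (p:ℝ)/q ∈ Icc (A - ℓ) (A + (R+1) * ℓ) := by
      constructor
      · nlinarith
      · nlinarith
    rcases hab p q hq hup hmem with h | h
    · apply Finset.mem_union_left
      simp only [Finset.mem_filter, Finset.mem_univ, true_and]
      rw [← h]; exact ⟨hρ1, hρ2⟩
    · apply Finset.mem_union_right
      simp only [Finset.mem_filter, Finset.mem_univ, true_and]
      rw [← h]; exact ⟨hρ1, hρ2⟩
  have hcard6 : (Finset.univ.filter fun k : Fin R => ¬ Safe R n A (k:ℕ)).card ≤ 6 := by
    calc _ ≤ _ := Finset.card_le_card hsub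
      _ ≤ _ + _ := Finset.card_union_le _ _
      _ ≤ 3 + 3 := Nat.add_le_add (card_hit hR n A a) (card_hit hR n A b)
  have := Finset.card_filter_add_card_filter_not
    (s := (Finset.univ : Finset (Fin R))) (p := fun k => Safe R n A (k:ℕ))
  rw [Finset.card_univ, Fintype.card_fin] at this
  rw [safeset]
  omega


/-- selection of the `R - 6` smallest safe children (junk value if too few are safe) -/
noncomputable def sel (R n : ℕ) (A : ℝ) : Fin (R - 6) ↪o Fin R :=
  if h : R - 6 ≤ (safeset R n A).card then (safeset R n A).orderEmbOfCardLe h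
  else (Finset.univ : Finset (Fin R)).orderEmbOfCardLe (by
    simpa using Nat.sub_le R 6)

lemma sel_safe {R : ℕ} (hR : 16 ≤ R) (n : ℕ) (A : ℝ) (i : Fin (R - 6)) :
    Safe R n A ((sel R n A i : Fin R) : ℕ) := by
  rw [sel, dif_pos (card_safeset hR n A)]
  have := Finset.orderEmbOfCardLe_mem (safeset R n A) (card_safeset hR n A) i
  classical
  simp only [safeset, Finset.mem_filter, Finset.mem_univ, true_and] at this
  exact this

/-- left endpoints of the nested intervals along a symbolic sequence -/
noncomputable def L (R : ℕ) (w : ℕ → Fin (R - 6)) : ℕ → ℝ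
  | 0 => 0
  | n + 1 => L R w n + ((sel R n (L R w n) (w n) : Fin R) : ℕ) * el R (n+1)

lemma L_step_le {R : ℕ} (hR : 16 ≤ R) (w : ℕ → Fin (R - 6)) (n : ℕ) :
    L R w n ≤ L R w (n+1) ∧ L R w (n+1) + el R (n+1) ≤ L R w n + el R n := by
  have hℓpos : 0 < el R (n+1) := el_pos hR (n+1)
  have hk : ((sel R n (L R w n) (w n) : Fin R) : ℕ) + 1 ≤ R := (sel R n (L R w n) (w n)).2
  constructor
  · rw [L]
    have : (0:ℝ) ≤ ((sel R n (L R w n) (w n) : Fin R) : ℕ) * el R (n+1) := by positivity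
    linarith
  · rw [L]
    have h2 : (((sel R n (L R w n) (w n) : Fin R) : ℕ) : ℝ) + 1 ≤ (R:ℝ) := by exact_mod_cast hk
    have h3 := el_succ hR n
    nlinarith

lemma L_mono {R : ℕ} (hR : 16 ≤ R) (w : ℕ → Fin (R - 6)) {n k : ℕ} (h : n ≤ k) :
    L R w n ≤ L R w k := by
  induction k with
  | zero => simp_all
  | succ k ih =>
    rcases Nat.lt_or_ge n (k+1) with h' | h'
    · exact (ih (by omega)).trans (L_step_le hR w k).1
    · have : n = k + 1 := by omega
      simp [this]

lemma L_add_el_mono {R : ℕ} (hR : 16 ≤ R) (w : ℕ → Fin (R - 6)) {n k : ℕ} (h : n ≤ k) :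
    L R w k + el R k ≤ L R w n + el R n := by
  induction k with
  | zero => simp_all
  | succ k ih =>
    rcases Nat.lt_or_ge n (k+1) with h' | h'
    · exact ((L_step_le hR w k).2).trans (ih (by omega))
    · have : n = k + 1 := by omega
      simp [this]

lemma L_congr {R : ℕ} {w w' : ℕ → Fin (R - 6)} {n : ℕ} (h : ∀ i < n, w i = w' i) :
    L R w n = L R w' n := by
  induction n with
  | zero => rfl
  | succ n ih =>
    have h1 : L R w n = L R w' n := ih fun i hi => h i (by omega)
    rw [L, L, h1, h n (by omega)]

/-- distinct prefixes give intervals at distance at least `el R n` between left endpoints -/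
lemma L_gap {R : ℕ} (hR : 16 ≤ R) {w w' : ℕ → Fin (R - 6)} {n : ℕ}
    (h : ∃ k < n, w k ≠ w' k) : el R n ≤ |L R w n - L R w' n| := by
  classical
  -- take the least differing index
  have hex : ∃ k, k < n ∧ w k ≠ w' k := by
    obtain ⟨k, h1, h2⟩ := h; exact ⟨k, h1, h2⟩
  set k := Nat.find hex with hkdef
  obtain ⟨hkn, hkne⟩ := Nat.find_spec hex
  have hpre : ∀ i < k, w i = w' i := fun i hi => by
    by_contra hne
    have := Nat.find_min hex hi
    push_neg at this
    exact hne (by by_contra h'; exact h' (by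
      exact absurd (this (lt_trans hi hkn)) (by simp [hne])))
  have hLk : L R w k = L R w' k := L_congr hpre
  -- wlog on which selected child is smaller
  have key : ∀ v v' : ℕ → Fin (R - 6), L R v k = L R v' k → (v k) < (v' k) →
      L R v (k+1) + el R (k+1) ≤ L R v' (k+1) := by
    intro v v' hL hlt
    have hℓpos : 0 < el R (k+1) := el_pos hR (k+1)
    have hsel : ((sel R k (L R v k) (v k) : Fin R) : ℕ) + 1 ≤
        ((sel R k (L R v k) (v' k) : Fin R) : ℕ) :=
      Nat.succ_le_of_lt ((sel R k (L R v k)).strictMono hlt)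
    have hsel' : (((sel R k (L R v k) (v k) : Fin R) : ℕ) : ℝ) + 1 ≤
        (((sel R k (L R v k) (v' k) : Fin R) : ℕ) : ℝ) := by exact_mod_cast hsel
    rw [L, L, ← hL]
    nlinarith
  have main : ∀ v v' : ℕ → Fin (R - 6), (∀ i < k, v i = v' i) → (v k) < (v' k) →
      L R v n + el R n ≤ L R v' n := by
    intro v v' hp hlt
    have h1 : L R v n + el R n ≤ L R v (k+1) + el R (k+1) := L_add_el_mono hR v hkn
    have h2 : L R v' (k+1) ≤ L R v' n := L_mono hR v' hkn
    have h3 := key v v' (L_congr hp) hlt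
    linarith
  rcases lt_trichotomy (w k) (w' k) with hlt | heq | hlt
  · have := main w w' hpre hlt
    have hel : 0 < el R n := el_pos hR n
    rw [abs_sub_comm, abs_of_nonneg (by linarith)]
    linarith
  · exact absurd heq hkne
  · have := main w' w (fun i hi => (hpre i hi).symm) hlt
    have hel : 0 < el R n := el_pos hR n
    rw [abs_of_nonneg (by linarith)]
    linarith


section
variable {R : ℕ}

/-- base-`m` digits of a real number, `m = R - 6` -/
noncomputable def digF (R : ℕ) (h : 0 < R - 6) (x : ℝ) (n : ℕ) : Fin (R - 6) :=
  ⟨⌊x * (R - 6 : ℕ) ^ (n+1)⌋₊ % (R - 6), Nat.mod_lt _ h⟩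

/-- the limit point of the nested intervals along the digit sequence of `x` -/
noncomputable def phi (R : ℕ) (h : 0 < R - 6) (x : ℝ) : ℝ :=
  ⨆ n, L R (digF R h x) n

lemma L_bddAbove (hR : 16 ≤ R) (w : ℕ → Fin (R - 6)) :
    BddAbove (range fun n => L R w n) := by
  refine ⟨1, ?_⟩
  rintro y ⟨n, rfl⟩
  have h1 := L_add_el_mono hR w (Nat.zero_le n)
  have h2 := el_pos hR n
  have h0 : L R w 0 = 0 := rfl
  have := el_zero R
  simp only at h1 ⊢
  linarith

lemma phi_mem (hR : 16 ≤ R) (h : 0 < R - 6) (x : ℝ) (n : ℕ) :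
    phi R h x ∈ Icc (L R (digF R h x) n) (L R (digF R h x) n + el R n) := by
  constructor
  · exact le_ciSup (L_bddAbove hR _) n
  · refine ciSup_le fun k => ?_
    rcases le_total k n with hk | hk
    · have := L_mono hR (digF R h x) hk
      have := el_pos hR n
      linarith
    · have h1 := L_add_el_mono hR (digF R h x) hk
      have h2 := el_pos hR k
      linarith

lemma phi_nonneg (hR : 16 ≤ R) (h : 0 < R - 6) (x : ℝ) : 0 ≤ phi R h x :=
  (phi_mem hR h x 0).1

lemma phi_le_one (hR : 16 ≤ R) (h : 0 < R - 6) (x : ℝ) : phi R h x ≤ 1 := by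
  have := (phi_mem hR h x 0).2
  have h0 : L R (digF R h x) 0 = 0 := rfl
  rw [h0, el_zero] at this
  linarith

/-- every constructed point is badly approximable with constant `1/R²` -/
lemma phi_badApprox (hR : 16 ≤ R) (h : 0 < R - 6) (x : ℝ) (p : ℤ) (q : ℕ) (hq : 0 < q) :
    ((R:ℝ)^2)⁻¹ / (q:ℝ) ^ 2 ≤ |phi R h x - (p:ℝ)/q| := by
  have hR1 : 1 < R := by omega
  -- find the stage n with R^(n-1) ≤ q² < R^n
  have hex : ∃ n : ℕ, q ^ 2 < R ^ n := ⟨q ^ 2, Nat.lt_pow_self hR1⟩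
  set n := Nat.find hex with hn
  have hlt : q ^ 2 < R ^ n := by rw [hn]; exact Nat.find_spec hex
  have hq1 : 1 ≤ q ^ 2 := Nat.one_le_pow _ _ hq
  have hn1 : 1 ≤ n := by
    rcases Nat.eq_zero_or_pos n with h0 | h0
    · rw [h0, pow_zero] at hlt; omega
    · exact h0
  have hge : R ^ (n-1) ≤ q ^ 2 := by
    by_contra hcon
    push_neg at hcon
    exact Nat.find_min hex (by omega) hcon
  -- phi x lies in the chosen child at stage n
  set w := digF R h x
  have hsafe := sel_safe hR n (L R w n) (w n)
  have hmem : phi R h x ∈ Icc (L R w n + ((sel R n (L R w n) (w n) : Fin R) : ℕ) * el R (n+1))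
      (L R w n + (((sel R n (L R w n) (w n) : Fin R) : ℕ) + 1) * el R (n+1)) := by
    have h1 := phi_mem hR h x (n+1)
    have hL : L R w (n+1) = L R w n + ((sel R n (L R w n) (w n) : Fin R) : ℕ) * el R (n+1) := rfl
    constructor
    · rw [← hL]; exact h1.1
    · have := h1.2
      rw [hL] at this
      linarith [this]
  have key := hsafe p q hq hge hlt _ hmem
  refine le_trans ?_ key
  -- (R²)⁻¹/q² ≤ el R (n+1),  since q² ≥ R^(n-1)
  have hq2 : (R:ℝ) ^ (n-1) ≤ (q:ℝ)^2 := by exact_mod_cast hge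
  have hRpos : (0:ℝ) < R := by exact_mod_cast Nat.lt_of_lt_of_le (by norm_num) hR
  have hqpos : (0:ℝ) < (q:ℝ)^2 := by positivity
  rw [el]
  rw [div_le_iff₀ hqpos]
  have hexp : (R:ℝ) ^ (n+1) = (R:ℝ)^2 * (R:ℝ)^(n-1) := by
    rw [← pow_add]
    congr 1
    omega
  rw [hexp, mul_inv]
  have h3 : (1:ℝ) ≤ ((R:ℝ)^(n-1))⁻¹ * (q:ℝ)^2 := by
    rw [inv_mul_eq_div, le_div_iff₀ (by positivity)]
    linarith
  calc ((R:ℝ)^2)⁻¹ = ((R:ℝ)^2)⁻¹ * 1 := by ring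
    _ ≤ ((R:ℝ)^2)⁻¹ * (((R:ℝ)^(n-1))⁻¹ * (q:ℝ)^2) :=
        mul_le_mul_of_nonneg_left h3 (by positivity)
    _ = ((R:ℝ)^2)⁻¹ * ((R:ℝ)^(n-1))⁻¹ * (q:ℝ)^2 := by ring
end


section
variable {R : ℕ}

/-- extend a finite word to an infinite one -/
def extSeq (h : 0 < R - 6) (n : ℕ) (v : Fin n → Fin (R - 6)) : ℕ → Fin (R - 6) :=
  fun k => if hk : k < n then v ⟨k, hk⟩ else ⟨0, h⟩

lemma measurable_digF (h : 0 < R - 6) (i : ℕ) : Measurable fun x => digF R h x i := by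
  apply measurable_of_countable (fun j : ℕ => (⟨j % (R-6), Nat.mod_lt _ h⟩ : Fin (R-6))) |>.comp
  exact Nat.measurable_floor.comp (measurable_id.mul_const _)

lemma measurable_Lof (hR : 16 ≤ R) (h : 0 < R - 6) (n : ℕ) :
    Measurable fun x => L R (digF R h x) n := by
  have hfact : ∀ x, L R (digF R h x) n = L R (extSeq h n (fun i => digF R h x i)) n := by
    intro x
    exact L_congr fun i hi => by simp [extSeq, hi]
  simp_rw [hfact]
  exact (measurable_of_countable fun v : Fin n → Fin (R-6) => L R (extSeq h n v) n).comp
    (measurable_pi_lambda _ fun i => measurable_digF h i)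

lemma measurable_phi (hR : 16 ≤ R) (h : 0 < R - 6) : Measurable (phi R h) := by
  apply measurable_of_tendsto_metrizable (fun n => measurable_Lof hR h n)
  rw [tendsto_pi_nhds]
  intro x
  exact tendsto_atTop_ciSup (fun a b hab => L_mono hR _ hab) (L_bddAbove hR _)

/-- the cylinder of a finite word -/
def cyl (h : 0 < R - 6) (n : ℕ) (v : Fin n → Fin (R - 6)) : Set ℝ :=
  {x | x ∈ Ico (0:ℝ) 1 ∧ ∀ i : Fin n, digF R h x (i : ℕ) = v i}

lemma floor_step (h : 0 < R - 6) {x : ℝ} (hx : x ∈ Ico (0:ℝ) 1) (n : ℕ) :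
    ⌊x * (R - 6 : ℕ) ^ (n+1)⌋₊ = (R - 6) * ⌊x * (R - 6 : ℕ) ^ n⌋₊ + (digF R h x n : ℕ) := by
  have hm : (0:ℝ) < ((R - 6 : ℕ) : ℝ) := by exact_mod_cast h
  have hdiv : ⌊x * (R - 6 : ℕ) ^ (n+1)⌋₊ / (R - 6) = ⌊x * (R - 6 : ℕ) ^ n⌋₊ := by
    rw [← Nat.floor_div_natCast]
    congr 1
    push_cast
    field_simp
    ring
  have := Nat.div_add_mod (⌊x * (R - 6 : ℕ) ^ (n+1)⌋₊) (R - 6)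
  rw [hdiv] at this
  simp only [digF, Fin.val_mk]
  omega

lemma prefix_floor (h : 0 < R - 6) {x y : ℝ} (hx : x ∈ Ico (0:ℝ) 1) (hy : y ∈ Ico (0:ℝ) 1)
    {n : ℕ} (hpre : ∀ i < n, digF R h x i = digF R h y i) :
    ⌊x * (R - 6 : ℕ) ^ n⌋₊ = ⌊y * (R - 6 : ℕ) ^ n⌋₊ := by
  induction n with
  | zero =>
    simp only [pow_zero, mul_one]
    rw [Nat.floor_eq_zero.2 (by exact hx.2), Nat.floor_eq_zero.2 (by exact hy.2)]
  | succ n ih =>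
    rw [floor_step h hx n, floor_step h hy n, ih (fun i hi => hpre i (by omega)),
      hpre n (by omega)]

lemma cyl_vol (hR : 16 ≤ R) (h : 0 < R - 6) (n : ℕ) (v : Fin n → Fin (R - 6)) :
    volume (cyl h n v) ≤ ENNReal.ofReal (((R - 6 : ℕ) : ℝ) ^ n)⁻¹ := by
  rcases eq_empty_or_nonempty (cyl h n v) with hemp | ⟨x₀, hx₀⟩
  · simp [hemp]
  set j := ⌊x₀ * (R - 6 : ℕ) ^ n⌋₊ with hj
  have hm : (0:ℝ) < ((R - 6 : ℕ) : ℝ) ^ n := by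
    have : (0:ℝ) < ((R - 6 : ℕ) : ℝ) := by exact_mod_cast h
    positivity
  have hsub : cyl h n v ⊆ Ico ((j:ℝ) / ((R - 6:ℕ):ℝ) ^ n) (((j:ℝ)+1) / ((R - 6:ℕ):ℝ) ^ n) := by
    rintro x ⟨hxI, hxd⟩
    have hfl : ⌊x * (R - 6 : ℕ) ^ n⌋₊ = j := by
      rw [hj]
      exact prefix_floor h hxI hx₀.1 (fun i hi => by
        rw [hxd ⟨i, hi⟩, hx₀.2 ⟨i, hi⟩])
    have hx0 : (0:ℝ) ≤ x := hxI.1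
    have hxm : (0:ℝ) ≤ x * ((R - 6:ℕ):ℝ) ^ n := by positivity
    have h1 : (j:ℝ) ≤ x * ((R - 6:ℕ):ℝ) ^ n := by
      have h1' := Nat.floor_le hxm
      rw [hfl] at h1'
      exact_mod_cast h1'
    have h2 : x * ((R - 6:ℕ):ℝ) ^ n < (j:ℝ) + 1 := by
      have h2' := Nat.lt_floor_add_one (x * ((R - 6:ℕ):ℝ) ^ n)
      rw [hfl] at h2'
      exact_mod_cast h2'
    constructor
    · rw [div_le_iff₀ hm]; linarith
    · rw [lt_div_iff₀ hm]; linarith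
  calc volume (cyl h n v) ≤ _ := measure_mono hsub
    _ ≤ _ := by
      rw [Real.volume_Ico]
      apply le_of_eq
      congr 1
      rw [div_sub_div_same]
      ring_nf
end


lemma floor_sep {s a b c : ℝ} (hs : 0 < s) (hgap : s ≤ b - a) :
    ⌊(a - c)/s⌋ < ⌊(b - c)/s⌋ := by
  have h1 : (a - c)/s + 1 ≤ (b - c)/s := by
    rw [div_add' _ _ _ hs.ne', div_le_div_iff₀ hs hs]
    nlinarith
  have h2 : ⌊(a - c)/s + 1⌋ ≤ ⌊(b - c)/s⌋ := Int.floor_le_floor h1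
  rw [Int.floor_add_one] at h2
  omega

lemma card_window {R : ℕ} (hR : 16 ≤ R) (h : 0 < R - 6) (n : ℕ) (c : ℝ) :
    (Finset.univ.filter fun v : Fin n → Fin (R - 6) =>
      L R (extSeq h n v) n ∈ Icc c (c + 2 * el R n)).card ≤ 3 := by
  classical
  have hs : 0 < el R n := el_pos hR n
  have hcard : (Finset.Icc (0:ℤ) 2).card = 3 := by rw [Int.card_Icc]; rfl
  rw [← hcard]
  refine Finset.card_le_card_of_injOn
    (fun v => ⌊(L R (extSeq h n v) n - c) / el R n⌋) (fun v hv => ?_) ?_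
  · simp only [Finset.mem_filter, Finset.mem_univ, true_and, mem_Icc, Finset.mem_coe] at hv
    simp only [Finset.mem_coe, Finset.mem_Icc]
    constructor
    · exact Int.floor_nonneg.2 (div_nonneg (by linarith) hs.le)
    · have hd : (L R (extSeq h n v) n - c) / el R n ≤ 2 := by
        rw [div_le_iff₀ hs]; linarith
      have := Int.floor_le_floor hd
      simpa using this
  · intro v hv v' hv' heq
    by_contra hne
    have hdiff : ∃ k < n, extSeq h n v k ≠ extSeq h n v' k := by
      have hex : ∃ i : Fin n, v i ≠ v' i := by
        by_contra hc
        push_neg at hc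
        exact hne (funext hc)
      obtain ⟨i, hi⟩ := hex
      exact ⟨i, i.2, by simpa [extSeq, i.2] using hi⟩
    have hgap := L_gap hR hdiff
    simp only at heq
    rcases abs_cases (L R (extSeq h n v) n - L R (extSeq h n v') n) with ⟨he, _⟩ | ⟨he, _⟩
    · rw [he] at hgap
      exact absurd heq (ne_of_gt (floor_sep hs (by linarith)))
    · rw [he] at hgap
      exact absurd heq (ne_of_lt (floor_sep hs (by linarith)))


/-- the Cantor measure -/
noncomputable def mu (R : ℕ) (h : 0 < R - 6) : Measure ℝ :=
  Measure.map (phi R h) (volume.restrict (Ico (0:ℝ) 1))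

lemma mu_Icc_le {R : ℕ} (hR : 16 ≤ R) (h : 0 < R - 6) (n : ℕ) {lo hi : ℝ}
    (hlen : hi - lo ≤ el R n) :
    mu R h (Icc lo hi) ≤ 3 * ENNReal.ofReal (((R - 6 : ℕ) : ℝ) ^ n)⁻¹ := by
  classical
  have hmap : mu R h (Icc lo hi) = volume (phi R h ⁻¹' (Icc lo hi) ∩ Ico (0:ℝ) 1) := by
    rw [mu, Measure.map_apply (measurable_phi hR h) measurableSet_Icc,
      Measure.restrict_apply (measurable_phi hR h measurableSet_Icc)]
  rw [hmap]
  set F := (Finset.univ.filter fun v : Fin n → Fin (R - 6) =>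
      L R (extSeq h n v) n ∈ Icc (lo - el R n) ((lo - el R n) + 2 * el R n)) with hF
  have hsub : phi R h ⁻¹' (Icc lo hi) ∩ Ico (0:ℝ) 1 ⊆ ⋃ v ∈ F, cyl h n v := by
    rintro x ⟨hx1, hx2⟩
    have hmem := phi_mem hR h x n
    set v : Fin n → Fin (R - 6) := fun i => digF R h x (i : ℕ) with hv
    have hLeq : L R (digF R h x) n = L R (extSeq h n v) n :=
      L_congr fun i hi => by simp [extSeq, hi, hv]
    have hvF : v ∈ F := by
      rw [hF]
      simp only [Finset.mem_filter, Finset.mem_univ, true_and, mem_Icc]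
      rw [← hLeq]
      simp only [mem_preimage, mem_Icc] at hx1
      constructor
      · linarith [hmem.2, hx1.1]
      · linarith [hmem.1, hx1.2]
    exact mem_biUnion hvF ⟨hx2, fun i => rfl⟩
  calc volume (phi R h ⁻¹' (Icc lo hi) ∩ Ico (0:ℝ) 1) ≤ ∑ v ∈ F, volume (cyl h n v) :=
        (measure_mono hsub).trans (measure_biUnion_finset_le F _)
    _ ≤ ∑ _v ∈ F, ENNReal.ofReal (((R - 6 : ℕ) : ℝ) ^ n)⁻¹ :=
        Finset.sum_le_sum fun v _ => cyl_vol hR h n v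
    _ = F.card * ENNReal.ofReal (((R - 6 : ℕ) : ℝ) ^ n)⁻¹ := by
        rw [Finset.sum_const, nsmul_eq_mul]
    _ ≤ 3 * ENNReal.ofReal (((R - 6 : ℕ) : ℝ) ^ n)⁻¹ := by
        apply mul_le_mul_left 
        exact_mod_cast Nat.cast_le.2 (card_window hR h n (lo - el R n))


section
variable {R : ℕ}

lemma mbar_large (hR : 16 ≤ R) : (10:ℝ) ≤ ((R - 6 : ℕ) : ℝ) := by
  have : (10:ℕ) ≤ R - 6 := by omega
  exact_mod_cast this

lemma mass_bound (hR : 16 ≤ R) (h : 0 < R - 6) {d : ℝ} (hd0 : 0 < d)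
    (hd1 : (R:ℝ) ^ d ≤ ((R - 6 : ℕ) : ℝ)) (S : Set ℝ)
    (hS : EMetric.diam S ≤ ENNReal.ofReal (1/2)) :
    (ENNReal.ofReal (3 * ((R - 6 : ℕ) : ℝ) ^ 2))⁻¹ * mu R h S ≤ EMetric.diam S ^ d := by
  classical
  set mb : ℝ := ((R - 6 : ℕ) : ℝ) with hmb
  have hmb10 : (10:ℝ) ≤ mb := mbar_large hR
  have hmbpos : (0:ℝ) < mb := by linarith
  have hc : (0:ℝ) < 3 * mb ^ 2 := by positivity
  have hcne : ENNReal.ofReal (3 * mb ^ 2) ≠ 0 := by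
    simp [ENNReal.ofReal_eq_zero, not_le, hc, hmbpos.ne']
  have hcnetop : ENNReal.ofReal (3 * mb ^ 2) ≠ ⊤ := ENNReal.ofReal_ne_top
  rcases eq_empty_or_nonempty S with rfl | ⟨u, hu⟩
  · simp
  have hdne : EMetric.diam S ≠ ⊤ := by
    refine ne_top_of_le_ne_top ?_ hS
    exact ENNReal.ofReal_ne_top
  have hbd : Bornology.IsBounded S := Metric.isBounded_iff_ediam_ne_top.2 hdne
  set D : ℝ := Metric.diam S with hD
  have hD0 : 0 ≤ D := Metric.diam_nonneg
  have hDhalf : D ≤ 1/2 := by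
    rw [hD, Metric.diam]
    calc (EMetric.diam S).toReal ≤ (ENNReal.ofReal (1/2)).toReal := ENNReal.toReal_mono ENNReal.ofReal_ne_top hS
      _ = 1/2 := by rw [ENNReal.toReal_ofReal]; norm_num
  have hsubIcc : S ⊆ Icc (u - D) (u + D) := by
    intro x hx
    have := Metric.dist_le_diam_of_mem hbd hx hu
    rw [Real.dist_eq] at this
    have := abs_le.1 this
    constructor <;> [linarith [this.1]; linarith [this.2]]
  -- key uniform estimate
  have hmain : ∀ n : ℕ, 2 * D ≤ el R n → mu R h S ≤ 3 * ENNReal.ofReal (mb ^ n)⁻¹ := by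
    intro n hn
    calc mu R h S ≤ mu R h (Icc (u - D) (u + D)) := measure_mono hsubIcc
      _ ≤ 3 * ENNReal.ofReal (mb ^ n)⁻¹ := mu_Icc_le hR h n (by linarith)
  rcases eq_or_ne (EMetric.diam S) 0 with hzero | hpos
  · -- diameter zero : measure is zero
    rw [hzero, ENNReal.zero_rpow_of_pos hd0]
    have hmu0 : mu R h S = 0 := by
      have hlim : Filter.Tendsto (fun n : ℕ => 3 * ENNReal.ofReal (mb ^ n)⁻¹)
          Filter.atTop (nhds 0) := by
        have h1 : Filter.Tendsto (fun n : ℕ => ENNReal.ofReal (mb ^ n)⁻¹)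
            Filter.atTop (nhds 0) := by
          have heq : ∀ n : ℕ, ENNReal.ofReal (mb ^ n)⁻¹ = ENNReal.ofReal mb⁻¹ ^ n := by
            intro n
            rw [← ENNReal.ofReal_pow (by positivity), inv_pow]
          simp_rw [heq]
          apply ENNReal.tendsto_pow_atTop_nhds_zero_of_lt_one
          rw [ENNReal.ofReal_lt_one]
          rw [inv_lt_one_iff₀]
          right; linarith
        have := ENNReal.Tendsto.const_mul h1 (Or.inr (by norm_num : (3:ℝ≥0∞) ≠ ⊤))
        simpa using this
      have hD0' : D = 0 := by
        rw [hD, Metric.diam, show Metric.ediam S = EMetric.diam S from rfl, hzero]; simp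
      refine le_antisymm (ge_of_tendsto hlim ?_) zero_le
      filter_upwards with n
      exact hmain n (by rw [hD0']; simpa using (el_pos hR n).le)
    rw [hmu0, mul_zero]
  · -- positive diameter
    have hDpos : 0 < D := by
      rw [hD, Metric.diam]
      exact ENNReal.toReal_pos hpos hdne
    have hexf : ∃ k : ℕ, el R k < 2 * D := by
      have hRr : (1:ℝ) < (R:ℝ) := by
        have : (16:ℝ) ≤ (R:ℝ) := by exact_mod_cast hR
        linarith
      obtain ⟨k, hk⟩ := pow_unbounded_of_one_lt ((2 * D)⁻¹) hRr
      refine ⟨k, ?_⟩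
      rw [el, inv_lt_comm₀ (by positivity) (by positivity)]
      exact hk
    set k := Nat.find hexf with hkdef
    have hk1 : 1 ≤ k := by
      rcases Nat.eq_zero_or_pos k with h0 | h0
      · exfalso
        have hsp := Nat.find_spec hexf
        rw [← hkdef, h0, el_zero] at hsp
        linarith
      · exact h0
    set n := k - 1 with hndef
    have hkn : k = n + 1 := by omega
    have hn2D : 2 * D ≤ el R n := by
      have hmin := Nat.find_min hexf (m := n) (by omega)
      push_neg at hmin
      exact hmin
    have hn2D' : el R (n+1) < 2 * D := by
      have hsp := Nat.find_spec hexf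
      rw [← hkdef, hkn] at hsp
      exact hsp
    have hRpos : (0:ℝ) < (R:ℝ) := by
      have : (16:ℝ) ≤ (R:ℝ) := by exact_mod_cast hR
      linarith
    have hDlow : ((R:ℝ) ^ (n+2))⁻¹ ≤ D := by
      have h1 : el R (n+1) = ((R:ℝ)^(n+1))⁻¹ := rfl
      have h16 : (16:ℝ) ≤ (R:ℝ) := by exact_mod_cast hR
      have h2 : (2:ℝ) ≤ (R:ℝ) := by linarith
      have h3 : ((R:ℝ)^(n+2))⁻¹ ≤ ((R:ℝ)^(n+1))⁻¹ / 2 := by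
        rw [div_eq_mul_inv, ← mul_inv]
        apply inv_anti₀ (by positivity)
        have hps : (R:ℝ)^(n+2) = (R:ℝ)^(n+1) * (R:ℝ) := pow_succ _ _
        nlinarith [pow_pos hRpos (n+1)]
      have h4 : ((R:ℝ)^(n+1))⁻¹ / 2 ≤ D := by
        rw [h1] at hn2D'
        linarith
      linarith
    have hreal : 3 * (mb ^ n)⁻¹ ≤ (3 * mb ^ 2) * D ^ d := by
      have hDd : (mb ^ (n+2))⁻¹ ≤ D ^ d := by
        have hstep1 : (((R:ℝ) ^ (n+2))⁻¹) ^ d ≤ D ^ d :=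
          Real.rpow_le_rpow (by positivity) hDlow hd0.le
        have hstep2 : (mb ^ (n+2))⁻¹ ≤ (((R:ℝ) ^ (n+2))⁻¹) ^ d := by
          rw [Real.inv_rpow (by positivity)]
          rw [← Real.rpow_natCast (R:ℝ) (n+2), ← Real.rpow_mul hRpos.le,
            mul_comm, Real.rpow_mul hRpos.le, Real.rpow_natCast]
          rw [inv_le_inv₀ (by positivity) (by positivity)]
          exact pow_le_pow_left₀ (Real.rpow_nonneg hRpos.le d) hd1 (n+2)
        exact le_trans hstep2 hstep1
      have hmbn : (0:ℝ) < (mb ^ n)⁻¹ := by positivity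
      have hexp : (mb ^ (n+2))⁻¹ = (mb^2)⁻¹ * (mb ^ n)⁻¹ := by
        rw [← mul_inv, ← pow_add]
        ring_nf
      rw [hexp] at hDd
      have hmb2 : (0:ℝ) < mb ^ 2 := by positivity
      have hmbne : mb ≠ 0 := ne_of_gt hmbpos
      have heq1 : (3 * mb ^ 2) * ((mb^2)⁻¹ * (mb ^ n)⁻¹) = 3 * (mb ^ n)⁻¹ := by
        field_simp
      have hle1 : (3 * mb ^ 2) * ((mb^2)⁻¹ * (mb ^ n)⁻¹) ≤ (3 * mb ^ 2) * D ^ d :=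
        mul_le_mul_of_nonneg_left hDd (by positivity)
      linarith
    have hdiam : EMetric.diam S = ENNReal.ofReal D := by
      rw [hD, Metric.diam, show Metric.ediam S = EMetric.diam S from rfl, ENNReal.ofReal_toReal hdne]
    rw [hdiam, ENNReal.ofReal_rpow_of_pos hDpos]
    rw [ENNReal.inv_mul_le_iff hcne hcnetop]
    calc mu R h S ≤ 3 * ENNReal.ofReal (mb ^ n)⁻¹ := hmain n hn2D
      _ = ENNReal.ofReal (3 * (mb ^ n)⁻¹) := by
          rw [ENNReal.ofReal_mul (by norm_num)]
          norm_num
      _ ≤ ENNReal.ofReal ((3 * mb ^ 2) * D ^ d) := ENNReal.ofReal_le_ofReal hreal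
      _ = ENNReal.ofReal (3 * mb ^ 2) * ENNReal.ofReal (D ^ d) := by
          rw [ENNReal.ofReal_mul hc.le]
end


section

/-- good parameters exist -/
lemma exists_R {r : ℝ} (hr1 : r < 1) : ∃ R : ℕ, 16 ≤ R ∧ (R:ℝ) ^ r ≤ ((R - 6 : ℕ) : ℝ) := by
  have h1 : Tendsto (fun x : ℝ => x ^ (-(1 - r))) atTop (𝓝 0) :=
    tendsto_rpow_neg_atTop (by linarith)
  have h2 : ∀ᶠ x : ℝ in atTop, x ^ (r - 1) < 1/2 := by
    have := h1.eventually (gt_mem_nhds (by norm_num : (0:ℝ) < 1/2))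
    simpa [neg_sub] using this
  have h3 : ∀ᶠ x : ℝ in atTop, (16:ℝ) ≤ x := eventually_ge_atTop 16
  have h4 : ∀ᶠ n : ℕ in atTop, ((n:ℝ) ^ (r - 1) < 1/2 ∧ (16:ℝ) ≤ (n:ℝ)) :=
    (tendsto_natCast_atTop_atTop).eventually (h2.and h3)
  obtain ⟨R, hRa⟩ := h4.exists
  obtain ⟨hRb, hRc⟩ := hRa
  have hR16 : 16 ≤ R := by exact_mod_cast hRc
  refine ⟨R, hR16, ?_⟩
  have hRpos : (0:ℝ) < (R:ℝ) := by linarith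
  have hcast : ((R - 6 : ℕ) : ℝ) = (R:ℝ) - 6 := by
    rw [Nat.cast_sub (by omega)]
    norm_num
  rw [hcast]
  have key : (R:ℝ) ^ r = (R:ℝ) ^ (r - 1) * (R:ℝ) := by
    rw [← Real.rpow_add_one (ne_of_gt hRpos) (r-1)]
    ring_nf
  rw [key]
  nlinarith [Real.rpow_nonneg hRpos.le (r - 1)]

lemma dimH_lower (r : ℝ≥0) (hr0 : 0 < r) (hr1 : (r:ℝ) < 1) :
    (r : ℝ≥0∞) ≤ dimH badApprox := by
  obtain ⟨R, hR16, hRd⟩ := exists_R hr1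
  have h : 0 < R - 6 := by omega
  have hr0' : (0:ℝ) < (r:ℝ) := by exact_mod_cast hr0
  set mb : ℝ := ((R - 6 : ℕ) : ℝ) with hmb
  set BK : Set ℝ := ⋂ (p : ℤ), ⋂ (q : ℕ), ⋂ (_ : 0 < q),
    {α : ℝ | ((R:ℝ)^2)⁻¹ / (q:ℝ)^2 ≤ |α - (p:ℝ)/q|} with hBK
  have hBKm : MeasurableSet BK := by
    refine MeasurableSet.iInter fun p => MeasurableSet.iInter fun q =>
      MeasurableSet.iInter fun _ => ?_
    exact (isClosed_le continuous_const
      ((continuous_id.sub continuous_const).abs)).measurableSet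
  have hsub : BK ⊆ badApprox := by
    intro α hα
    refine ⟨((R:ℝ)^2)⁻¹, by positivity, fun p q hq => ?_⟩
    have := mem_iInter.1 (mem_iInter.1 (mem_iInter.1 hα p) q) hq
    exact this
  have hphiBK : ∀ x : ℝ, phi R h x ∈ BK := by
    intro x
    refine mem_iInter.2 fun p => mem_iInter.2 fun q => mem_iInter.2 fun hq => ?_
    exact phi_badApprox hR16 h x p q hq
  have hmuBK : mu R h BK = 1 := by
    rw [mu, Measure.map_apply (measurable_phi hR16 h) hBKm]
    have : phi R h ⁻¹' BK = univ := eq_univ_of_forall hphiBK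
    rw [this, Measure.restrict_apply MeasurableSet.univ, univ_inter, Real.volume_Ico]
    norm_num
  set c : ℝ≥0∞ := ENNReal.ofReal (3 * mb ^ 2) with hc
  have hmeasle : (c⁻¹ • mu R h) ≤ μH[(r:ℝ)] := by
    refine Measure.le_hausdorffMeasure _ _ (ENNReal.ofReal (1/2)) (by norm_num) fun s hs => ?_
    rw [Measure.smul_apply, smul_eq_mul]
    exact mass_bound hR16 h hr0' hRd s hs
  have hne : μH[(r:ℝ)] badApprox ≠ 0 := by
    have h1 : c⁻¹ ≤ μH[(r:ℝ)] BK := by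
      have := Measure.le_iff'.1 hmeasle BK
      rwa [Measure.smul_apply, smul_eq_mul, hmuBK, mul_one] at this
    have h2 : μH[(r:ℝ)] BK ≤ μH[(r:ℝ)] badApprox := measure_mono hsub
    have h3 : c⁻¹ ≠ 0 := ENNReal.inv_ne_zero.2 ENNReal.ofReal_ne_top
    intro hcon
    rw [hcon] at h2
    exact h3 (le_antisymm (h1.trans h2) zero_le)
  exact le_dimH_of_hausdorffMeasure_ne_zero hne

end
end Jarnik

/-- Jarník's theorem: the set of badly approximable numbers has Hausdorff dimension `1`. -/
theorem stmt10 : dimH badApprox = 1 := by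
  apply le_antisymm
  · exact (dimH_mono (Set.subset_univ _)).trans Real.dimH_univ.le
  · refine ENNReal.le_of_forall_nnreal_lt fun r hr => ?_
    rcases eq_or_ne r 0 with rfl | hr0
    · simp
    · have hr1 : (r:ℝ) < 1 := by
        have : (r : ℝ≥0∞) < 1 := hr
        exact_mod_cast this
      exact Jarnik.dimH_lower r (zero_lt_iff.2 hr0) hr1
end

section
/- If Ψ : ℕ → (0,∞) satisfies Σ_{k=1}^∞ k³Ψ(k)² < ∞, then the set W*(Ψ) = {z ∈ ℂ : |z − p/q| < Ψ(⌊|q|⌋) for infinitely many ratios p/q of Gaussian integers p, q with q ≠ 0} has zero two-dimensional Lebesgue measure. -/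
open MeasureTheory Metric Set Filter
open scoped ENNReal NNReal


lemma gauss_one_le {q : GaussianInt} (hq : q ≠ 0) : 1 ≤ ‖(q : ℂ)‖ := by
  have h1 : (1:ℝ) ≤ Complex.normSq (q : ℂ) := by
    rw [← GaussianInt.intCast_real_norm]
    have : 0 < Zsqrtd.norm q := GaussianInt.norm_pos.2 hq
    exact_mod_cast this
  nlinarith [Complex.sq_norm (q : ℂ), norm_nonneg (q : ℂ)]

lemma gauss_dist {q q' : GaussianInt} (h : q ≠ q') : 1 ≤ dist (q : ℂ) (q' : ℂ) := by
  have h0 : q - q' ≠ 0 := sub_ne_zero.2 h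
  have := gauss_one_le h0
  rw [Complex.dist_eq, ← GaussianInt.toComplex_sub]; exact this

lemma gauss_finite (B : ℝ) : {q : GaussianInt | ‖(q : ℂ)‖ ≤ B}.Finite := by
  have : {q : GaussianInt | ‖(q : ℂ)‖ ≤ B} ⊆
      (fun ab : ℤ × ℤ => (⟨ab.1, ab.2⟩ : GaussianInt)) ''
        (Set.Icc (-⌈B⌉) ⌈B⌉ ×ˢ Set.Icc (-⌈B⌉) ⌈B⌉) := by
    intro q hq
    refine ⟨(q.re, q.im), ?_, rfl⟩
    have hre : |(q.re : ℝ)| ≤ B := by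
      rw [GaussianInt.intCast_re]; exact (Complex.abs_re_le_norm _).trans hq
    have him : |(q.im : ℝ)| ≤ B := by
      rw [GaussianInt.intCast_im]; exact (Complex.abs_im_le_norm _).trans hq
    have hB : B ≤ (⌈B⌉ : ℝ) := Int.le_ceil B
    constructor
    · rw [Set.mem_Icc, ← abs_le]
      exact_mod_cast hre.trans hB
    · rw [Set.mem_Icc, ← abs_le]
      exact_mod_cast him.trans hB
  exact Set.Finite.subset (Set.Finite.image _ ((Set.finite_Icc _ _).prod (Set.finite_Icc _ _))) this


lemma pack (s : Finset GaussianInt) (A : Set ℂ)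
    (hA : ∀ q ∈ s, Metric.ball (q : ℂ) 2⁻¹ ⊆ A) :
    (s.card : ℝ≥0∞) * ENNReal.ofReal (Real.pi / 4) ≤ volume A := by
  have hvol : ∀ q : ℂ, volume (Metric.ball q 2⁻¹) = ENNReal.ofReal (Real.pi / 4) := by
    intro q
    rw [Complex.volume_ball, ← ENNReal.ofReal_pow (by norm_num), ← ENNReal.ofReal_coe_nnreal,
      ← ENNReal.ofReal_mul (by positivity), NNReal.coe_real_pi,
      show (2⁻¹:ℝ)^2 * Real.pi = Real.pi / 4 by ring]
  have hd : (s : Set GaussianInt).PairwiseDisjoint (fun q => Metric.ball (q : ℂ) 2⁻¹) := by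
    intro q _ q' _ hne
    apply Metric.ball_disjoint_ball
    have := gauss_dist hne
    linarith
  calc (s.card : ℝ≥0∞) * ENNReal.ofReal (Real.pi / 4)
      = ∑ q ∈ s, volume (Metric.ball (q : ℂ) 2⁻¹) := by
        simp [hvol, Finset.sum_const, mul_comm]
    _ = volume (⋃ q ∈ s, Metric.ball (q : ℂ) 2⁻¹) := by
        rw [measure_biUnion_finset hd (fun q _ => measurableSet_ball)]
    _ ≤ volume A := measure_mono (Set.iUnion₂_subset hA)

lemma card_le_of_pack {s : Finset GaussianInt} {b : ℝ} (hb0 : 0 ≤ b)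
    (h : (s.card : ℝ≥0∞) * ENNReal.ofReal (Real.pi / 4) ≤ ENNReal.ofReal (Real.pi * b)) :
    (s.card : ℝ) ≤ 4 * b := by
  have hπ := Real.pi_pos
  have h2 : ENNReal.ofReal ((s.card : ℝ) * (Real.pi / 4)) ≤ ENNReal.ofReal (Real.pi * b) := by
    rwa [ENNReal.ofReal_mul (by positivity), ENNReal.ofReal_natCast]
  rcases le_or_gt (Real.pi * b) 0 with hb | hb
  · rw [ENNReal.ofReal_eq_zero.2 hb, nonpos_iff_eq_zero, ENNReal.ofReal_eq_zero] at h2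
    have hc : (0:ℝ) ≤ (s.card : ℝ) * (Real.pi / 4) := by positivity
    have : (s.card : ℝ) * (Real.pi / 4) = 0 := le_antisymm h2 hc
    have hc0 : (0:ℝ) ≤ (s.card : ℝ) := Nat.cast_nonneg _
    nlinarith
  · have h3 : (s.card : ℝ) * (Real.pi / 4) ≤ Real.pi * b :=
      (ENNReal.ofReal_le_ofReal_iff hb.le).1 h2
    nlinarith



-- counting Gaussian integers in the annulus n ≤ |q| < n+1
lemma annulus_card {n : ℕ} (hn : 1 ≤ n) {s : Finset GaussianInt}
    (hs : ∀ q ∈ s, (n : ℝ) ≤ ‖(q : ℂ)‖ ∧ ‖(q : ℂ)‖ < n + 1) :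
    (s.card : ℝ) ≤ 4 * (6 * n + 3) := by
  have hn1 : (1:ℝ) ≤ n := by exact_mod_cast hn
  have hsub : ∀ q ∈ s, Metric.ball (q : ℂ) 2⁻¹ ⊆
      Metric.closedBall (0:ℂ) ((n:ℝ) + 2) \ Metric.ball (0:ℂ) ((n:ℝ) - 1) := by
    intro q hq z hz
    obtain ⟨h1, h2⟩ := hs q hq
    rw [Metric.mem_ball, Complex.dist_eq] at hz
    have e1 : ‖z‖ ≤ ‖(q:ℂ)‖ + ‖z - q‖ := by
      have := norm_add_le (q:ℂ) (z - q); simpa using this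
    have e2 : ‖(q:ℂ)‖ ≤ ‖z‖ + ‖z - q‖ := by
      have h3 := norm_add_le z ((q:ℂ) - z)
      have h4 : ‖(q:ℂ) - z‖ = ‖z - q‖ := by
        rw [← norm_neg]; ring_nf
      rw [h4] at h3; simpa using h3
    constructor
    · rw [Metric.mem_closedBall, Complex.dist_eq, sub_zero]; linarith
    · rw [Metric.mem_ball, Complex.dist_eq, sub_zero]; push_neg; linarith
  have hvol : volume (Metric.closedBall (0:ℂ) ((n:ℝ) + 2) \ Metric.ball (0:ℂ) ((n:ℝ) - 1))
      = ENNReal.ofReal (Real.pi * (6 * n + 3)) := by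
    rw [measure_diff (Metric.ball_subset_closedBall.trans
        (Metric.closedBall_subset_closedBall (by linarith)))
        measurableSet_ball.nullMeasurableSet measure_ball_lt_top.ne,
      Complex.volume_closedBall, Complex.volume_ball,
      ← ENNReal.ofReal_pow (by linarith), ← ENNReal.ofReal_pow (by linarith),
      ← ENNReal.ofReal_coe_nnreal, NNReal.coe_real_pi,
      ← ENNReal.ofReal_mul (by positivity), ← ENNReal.ofReal_mul (by positivity),
      ← ENNReal.ofReal_sub _ (by positivity)]
    congr 1; ring
  exact card_le_of_pack (by positivity) (hvol ▸ pack s _ hsub)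

-- counting Gaussian integers in a disk
lemma disk_card {B : ℝ} (hB : 0 ≤ B) {s : Finset GaussianInt}
    (hs : ∀ q ∈ s, ‖(q : ℂ)‖ ≤ B) :
    (s.card : ℝ) ≤ 4 * (B + 1) ^ 2 := by
  have hsub : ∀ q ∈ s, Metric.ball (q : ℂ) 2⁻¹ ⊆ Metric.closedBall (0:ℂ) (B + 1) := by
    intro q hq z hz
    rw [Metric.mem_ball, Complex.dist_eq] at hz
    have e1 : ‖z‖ ≤ ‖(q:ℂ)‖ + ‖z - q‖ := by
      have := norm_add_le (q:ℂ) (z - q); simpa using this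
    have := hs q hq
    rw [Metric.mem_closedBall, Complex.dist_eq, sub_zero]; linarith
  have hvol : volume (Metric.closedBall (0:ℂ) (B + 1)) = ENNReal.ofReal (Real.pi * (B+1)^2) := by
    rw [Complex.volume_closedBall, ← ENNReal.ofReal_pow (by linarith),
      ← ENNReal.ofReal_coe_nnreal, NNReal.coe_real_pi, ← ENNReal.ofReal_mul (by positivity),
      mul_comm]
  exact card_le_of_pack (by positivity) (hvol ▸ pack s _ hsub)


/-- `W*(Ψ)`: complex numbers `z` with `|z - p/q| < Ψ(⌊|q|⌋)` for infinitely many pairs of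
Gaussian integers `p`, `q` with `q ≠ 0`. -/
def WstarPsi (Ψ : ℕ → ℝ) : Set ℂ :=
  {z | {pq : GaussianInt × GaussianInt | pq.2 ≠ 0 ∧
    ‖z - (pq.1 : ℂ) / (pq.2 : ℂ)‖ < Ψ ⌊‖(pq.2 : ℂ)‖⌋₊}.Infinite}


set_option maxHeartbeats 1000000 in
lemma mainR (Ψ : ℕ → ℝ) (hΨpos : ∀ k : ℕ, 0 < Ψ k)
    (hsum : Summable fun k : ℕ => (k : ℝ) ^ 3 * Ψ k ^ 2) (R : ℝ) (hR : 0 ≤ R) :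
    volume (WstarPsi Ψ ∩ Metric.ball (0:ℂ) R) = 0 := by
  set D : ℝ := Real.sqrt (∑' k : ℕ, (k : ℝ) ^ 3 * Ψ k ^ 2) with hDdef
  have hD0 : 0 ≤ D := Real.sqrt_nonneg _
  have hD : ∀ n : ℕ, 1 ≤ n → Ψ n ≤ D := by
    intro n hn
    have hn1 : (1:ℝ) ≤ (n:ℝ) := by exact_mod_cast hn
    have h1 : Ψ n ^ 2 ≤ (n:ℝ) ^ 3 * Ψ n ^ 2 := by
      have hcube : (1:ℝ) ≤ (n:ℝ) ^ 3 := one_le_pow₀ hn1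
      nlinarith [sq_nonneg (Ψ n)]
    have h2 : (n:ℝ) ^ 3 * Ψ n ^ 2 ≤ ∑' k : ℕ, (k : ℝ) ^ 3 * Ψ k ^ 2 :=
      hsum.le_tsum n fun k _ => by positivity
    calc Ψ n = Real.sqrt (Ψ n ^ 2) := (Real.sqrt_sq (hΨpos n).le).symm
      _ ≤ D := Real.sqrt_le_sqrt (h1.trans h2)
  set Qs : ℕ → Set GaussianInt := fun n => {q | q ≠ 0 ∧ ⌊‖(q:ℂ)‖⌋₊ = n} with hQsdef
  set Ps : ℕ → Set GaussianInt :=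
    fun n => {p | ‖(p:ℂ)‖ ≤ ((n:ℝ) + 1) * (R + Ψ n)} with hPsdef
  -- basic facts about members of Qs
  have hQmem : ∀ n : ℕ, ∀ q ∈ Qs n, (n:ℝ) ≤ ‖(q:ℂ)‖ ∧ ‖(q:ℂ)‖ < n + 1 := by
    intro n q hq
    have := hq.2
    exact ⟨this ▸ Nat.floor_le (norm_nonneg _), this ▸ Nat.lt_floor_add_one _⟩
  have hQone : ∀ n : ℕ, ∀ q ∈ Qs n, 1 ≤ n := by
    intro n q hq
    have h1 := gauss_one_le hq.1
    have := hq.2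
    exact this ▸ Nat.le_floor (by exact_mod_cast h1)
  have hQfin : ∀ n : ℕ, (Qs n).Finite := by
    intro n
    apply (gauss_finite ((n:ℝ) + 1)).subset
    exact fun q hq => ((hQmem n q hq).2).le
  have hPfin : ∀ n : ℕ, (Ps n).Finite :=
    fun n => (gauss_finite _).subset fun p hp => hp
  set A : ℕ → Set ℂ :=
    fun n => ⋃ q ∈ Qs n, ⋃ p ∈ Ps n, Metric.ball ((p:ℂ) / (q:ℂ)) (Ψ n) with hAdef
  -- volume bound
  set K : ℝ := 768 * Real.pi * (R + D + 1) ^ 2 with hKdef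
  have hAvol : ∀ n : ℕ, volume (A n) ≤ ENNReal.ofReal (K * ((n:ℝ) ^ 3 * Ψ n ^ 2)) := by
    intro n
    rcases Nat.eq_zero_or_pos n with rfl | hn
    · have hQ0 : Qs 0 = ∅ :=
        Set.eq_empty_iff_forall_notMem.2 fun q hq => absurd (hQone 0 q hq) (by norm_num)
      have : A 0 = ∅ := by rw [hAdef]; simp [hQ0]
      simp [this]
    · have hn1 : (1:ℝ) ≤ (n:ℝ) := by exact_mod_cast hn
      have hQcard : (((hQfin n).toFinset.card : ℝ)) ≤ 4 * (6 * n + 3) :=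
        annulus_card hn (fun q hq => hQmem n q ((hQfin n).mem_toFinset.1 hq))
      have hPcard : (((hPfin n).toFinset.card : ℝ)) ≤ 4 * (((n:ℝ)+1) * (R + D) + 1) ^ 2 := by
        apply disk_card (by positivity)
        intro p hp
        have hp' : ‖(p:ℂ)‖ ≤ ((n:ℝ) + 1) * (R + Ψ n) := (hPfin n).mem_toFinset.1 hp
        have := hD n hn
        nlinarith
      have hball : ∀ (c : ℂ), volume (Metric.ball c (Ψ n)) = ENNReal.ofReal (Real.pi * Ψ n ^ 2) := by
        intro c
        rw [Complex.volume_ball, ← ENNReal.ofReal_pow (hΨpos n).le,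
          ← ENNReal.ofReal_coe_nnreal, NNReal.coe_real_pi,
          ← ENNReal.ofReal_mul (by positivity), mul_comm]
      have step1 : volume (A n) ≤
          ((hQfin n).toFinset.card : ℝ≥0∞) * (((hPfin n).toFinset.card : ℝ≥0∞)
            * ENNReal.ofReal (Real.pi * Ψ n ^ 2)) := by
        have hAeq : A n = ⋃ q ∈ (hQfin n).toFinset, ⋃ p ∈ (hPfin n).toFinset,
            Metric.ball ((p:ℂ) / (q:ℂ)) (Ψ n) := by
          rw [hAdef]
          ext z
          simp only [Set.mem_iUnion, Set.Finite.mem_toFinset]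
        rw [hAeq]
        calc volume (⋃ q ∈ (hQfin n).toFinset, ⋃ p ∈ (hPfin n).toFinset,
              Metric.ball ((p:ℂ) / (q:ℂ)) (Ψ n))
            ≤ ∑ q ∈ (hQfin n).toFinset, volume (⋃ p ∈ (hPfin n).toFinset,
              Metric.ball ((p:ℂ) / (q:ℂ)) (Ψ n)) := measure_biUnion_finset_le _ _
          _ ≤ ∑ _q ∈ (hQfin n).toFinset, ∑ _p ∈ (hPfin n).toFinset,
              ENNReal.ofReal (Real.pi * Ψ n ^ 2) := by
              refine Finset.sum_le_sum fun q _ => ?_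
              refine le_trans (measure_biUnion_finset_le _ _) ?_
              exact Finset.sum_le_sum fun p _ => le_of_eq (hball _)
          _ = ((hQfin n).toFinset.card : ℝ≥0∞) * (((hPfin n).toFinset.card : ℝ≥0∞)
              * ENNReal.ofReal (Real.pi * Ψ n ^ 2)) := by
              simp [Finset.sum_const, nsmul_eq_mul]
      refine step1.trans ?_
      have hcastQ : ((hQfin n).toFinset.card : ℝ≥0∞)
          = ENNReal.ofReal ((hQfin n).toFinset.card : ℝ) := by
        rw [ENNReal.ofReal_natCast]
      have hcastP : (((hPfin n).toFinset.card : ℝ≥0∞))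
          = ENNReal.ofReal ((hPfin n).toFinset.card : ℝ) := by
        rw [ENNReal.ofReal_natCast]
      rw [hcastQ, hcastP, ← ENNReal.ofReal_mul (Nat.cast_nonneg _),
        ← ENNReal.ofReal_mul (Nat.cast_nonneg _)]
      apply ENNReal.ofReal_le_ofReal
      have hfact : (4 * (6 * (n:ℝ) + 3)) * (4 * (((n:ℝ)+1) * (R + D) + 1) ^ 2)
          ≤ 768 * (R + D + 1) ^ 2 * (n:ℝ) ^ 3 := by
        have hb1 : ((n:ℝ)+1) * (R + D) + 1 ≤ ((n:ℝ)+1) * (R + D + 1) := by nlinarith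
        have hb2 : (((n:ℝ)+1) * (R + D) + 1) ^ 2 ≤ ((n:ℝ)+1) ^ 2 * (R + D + 1) ^ 2 := by
          rw [← mul_pow]
          apply pow_le_pow_left₀ (by positivity) hb1
        have hb3 : (4 * (6 * (n:ℝ) + 3)) * (4 * (((n:ℝ)+1) ^ 2 * (R + D + 1) ^ 2))
            ≤ 768 * (R + D + 1) ^ 2 * (n:ℝ) ^ 3 := by
          have c1 : 6*(n:ℝ)+3 ≤ 9*(n:ℝ) := by linarith
          have c2 : ((n:ℝ)+1)^2 ≤ 4*(n:ℝ)^2 := by nlinarith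
          have c3 : (6*(n:ℝ)+3) * ((n:ℝ)+1)^2 ≤ 9*(n:ℝ)*(4*(n:ℝ)^2) :=
            mul_le_mul c1 c2 (by positivity) (by positivity)
          nlinarith [mul_le_mul_of_nonneg_right c3 (sq_nonneg (R+D+1)),
            mul_nonneg (pow_nonneg (Nat.cast_nonneg (α := ℝ) n) 3) (sq_nonneg (R+D+1))]
        nlinarith [sq_nonneg (R + D + 1), sq_nonneg ((n:ℝ)+1)]
      calc ((hQfin n).toFinset.card : ℝ) * (((hPfin n).toFinset.card : ℝ) * (Real.pi * Ψ n ^ 2))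
          ≤ (4 * (6 * (n:ℝ) + 3)) * ((4 * (((n:ℝ)+1) * (R + D) + 1) ^ 2) * (Real.pi * Ψ n ^ 2)) := by
            have h1 : (0:ℝ) ≤ Real.pi * Ψ n ^ 2 := by positivity
            have h2 : (0:ℝ) ≤ ((hPfin n).toFinset.card : ℝ) := Nat.cast_nonneg _
            have h3 : (0:ℝ) ≤ ((hQfin n).toFinset.card : ℝ) := Nat.cast_nonneg _
            nlinarith [mul_le_mul hQcard (mul_le_mul_of_nonneg_right hPcard h1)
              (by positivity) (by positivity)]
        _ ≤ K * ((n:ℝ) ^ 3 * Ψ n ^ 2) := by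
            rw [hKdef]
            nlinarith [mul_le_mul_of_nonneg_right hfact (by positivity : (0:ℝ) ≤ Real.pi * Ψ n ^ 2),
              Real.pi_pos]
  -- summability
  have htsum : (∑' n : ℕ, volume (A n)) ≠ ⊤ := by
    have hgsum : Summable (fun n : ℕ => K * ((n:ℝ) ^ 3 * Ψ n ^ 2)) := hsum.mul_left K
    refine ne_top_of_le_ne_top ?_ (ENNReal.tsum_le_tsum hAvol)
    rw [← ENNReal.ofReal_tsum_of_nonneg (fun n => by positivity) hgsum]
    exact ENNReal.ofReal_ne_top
  -- Borel-Cantelli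
  have hBC : volume {z : ℂ | ∃ᶠ n in atTop, z ∈ A n} = 0 :=
    measure_setOf_frequently_eq_zero (by simpa using htsum)
  refine measure_mono_null ?_ hBC
  rintro z ⟨hz, hzR⟩
  have hzR' : ‖z‖ < R := by
    rw [Metric.mem_ball, Complex.dist_eq, sub_zero] at hzR; exact hzR
  rw [Set.mem_setOf_eq, Filter.frequently_atTop]
  intro N
  -- find a pair with large q
  set S : Set (GaussianInt × GaussianInt) := {pq | pq.2 ≠ 0 ∧
    ‖z - (pq.1 : ℂ) / (pq.2 : ℂ)‖ < Ψ ⌊‖(pq.2 : ℂ)‖⌋₊} with hSdef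
  have habs : ∀ pq : GaussianInt × GaussianInt, pq ∈ S →
      ‖(pq.1 : ℂ)‖ < ‖(pq.2 : ℂ)‖ * (R + Ψ ⌊‖(pq.2 : ℂ)‖⌋₊) := by
    rintro ⟨p, q⟩ ⟨hq0, hlt⟩
    have hq0' : (q:ℂ) ≠ 0 := by
      rwa [Ne, GaussianInt.toComplex_eq_zero]
    have hqpos : 0 < ‖(q:ℂ)‖ := norm_pos_iff.2 hq0'
    have hdiv : ‖(p:ℂ) / (q:ℂ)‖ = ‖(p:ℂ)‖ / ‖(q:ℂ)‖ :=
      norm_div _ _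
    have htri : ‖(p:ℂ)/(q:ℂ)‖ ≤ ‖z‖ + ‖z - (p:ℂ)/(q:ℂ)‖ := by
      have := norm_add_le z ((p:ℂ)/(q:ℂ) - z)
      have h4 : ‖(p:ℂ)/(q:ℂ) - z‖ = ‖z - (p:ℂ)/(q:ℂ)‖ := by
        rw [← norm_neg]; ring_nf
      rw [h4] at this; simpa using this
    have hsmall : ‖(p:ℂ)/(q:ℂ)‖ < R + Ψ ⌊‖(q:ℂ)‖⌋₊ := by
      simp only at hlt
      linarith
    rw [hdiv, div_lt_iff₀ hqpos] at hsmall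
    simpa [mul_comm] using hsmall
  have key : ∃ pq ∈ S, N ≤ ⌊‖((pq.2 : GaussianInt) : ℂ)‖⌋₊ := by
    by_contra hcon
    push_neg at hcon
    apply hz
    show S.Finite
    have hsub : S ⊆ ⋃ k ∈ Set.Iio N,
        ({p : GaussianInt | ‖(p:ℂ)‖ ≤ ((N:ℝ)+1) * (R + Ψ k)} ×ˢ
         {q : GaussianInt | ‖(q:ℂ)‖ ≤ (N:ℝ)+1}) := by
      rintro ⟨p, q⟩ hpq
      have hk := hcon (p, q) hpq
      set k := ⌊‖((q : GaussianInt) : ℂ)‖⌋₊ with hkdef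
      have hqlt : ‖(q:ℂ)‖ < (k:ℝ) + 1 := Nat.lt_floor_add_one _
      have hkN : (k:ℝ) + 1 ≤ (N:ℝ) := by exact_mod_cast hk
      have hple := habs (p, q) hpq
      have hΨk := (hΨpos k).le
      have hRp : 0 ≤ R + Ψ k := by linarith
      refine Set.mem_biUnion hk ⟨?_, ?_⟩
      · show ‖(p:ℂ)‖ ≤ ((N:ℝ)+1) * (R + Ψ k)
        have : ‖(q:ℂ)‖ * (R + Ψ k) ≤ ((N:ℝ)+1) * (R + Ψ k) := by
          apply mul_le_mul_of_nonneg_right _ hRp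
          linarith
        simp only at hple
        linarith
      · show ‖(q:ℂ)‖ ≤ (N:ℝ)+1
        linarith
    exact ((Set.finite_Iio N).biUnion
      (fun k _ => (gauss_finite _).prod (gauss_finite _))).subset hsub
  obtain ⟨⟨p, q⟩, hpq, hN⟩ := key
  refine ⟨⌊‖((q : GaussianInt) : ℂ)‖⌋₊, hN, ?_⟩
  set n := ⌊‖((q : GaussianInt) : ℂ)‖⌋₊ with hndef
  rw [hAdef]
  refine Set.mem_biUnion (show q ∈ Qs n from ⟨hpq.1, rfl⟩) ?_
  refine Set.mem_biUnion (show p ∈ Ps n from ?_) ?_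
  · show ‖(p:ℂ)‖ ≤ ((n:ℝ) + 1) * (R + Ψ n)
    have hple := habs (p, q) hpq
    have hqlt : ‖(q:ℂ)‖ < (n:ℝ) + 1 := Nat.lt_floor_add_one _
    have hRp : 0 ≤ R + Ψ n := by linarith [(hΨpos n).le]
    have : ‖(q:ℂ)‖ * (R + Ψ n) ≤ ((n:ℝ)+1) * (R + Ψ n) :=
      mul_le_mul_of_nonneg_right hqlt.le hRp
    simp only at hple
    linarith
  · rw [Metric.mem_ball, Complex.dist_eq]
    exact hpq.2


/-- If `∑ k³ Ψ(k)² < ∞`, then `W*(Ψ)` has zero planar Lebesgue measure. -/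
theorem stmt16 (Ψ : ℕ → ℝ) (hΨpos : ∀ k : ℕ, 0 < Ψ k)
    (hsum : Summable fun k : ℕ => (k : ℝ) ^ 3 * Ψ k ^ 2) :
    volume (WstarPsi Ψ) = 0 := by
  have h0 : volume (⋃ R : ℕ, WstarPsi Ψ ∩ Metric.ball (0:ℂ) R) = 0 :=
    measure_iUnion_null fun R => mainR Ψ hΨpos hsum R (Nat.cast_nonneg R)
  refine measure_mono_null (fun z hz => ?_) h0
  refine Set.mem_iUnion.2 ⟨⌊‖z‖⌋₊ + 1, hz, ?_⟩
  rw [Metric.mem_ball, Complex.dist_eq, sub_zero]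
  have := Nat.lt_floor_add_one (‖z‖)
  push_cast
  linarith
end
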